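/- arXiv:2505.24131 — 6 statements merged into one kernel-verified Lean document; each statement's English description precedes it below -/
import Mathlib

section
/- Let n ≥ 3 be an integer, let 0 < m < (n-2)/n, η₀ > 0, ρ₁ > 0, let β be a real number with -ρ₁/2 < β < m·ρ₁/(n-2-n·m), and set α = (2β+ρ₁)/(1-m). Let r₀ > 0 and let f : [0,r₀) → ℝ be continuously differentiable on [0,r₀), twice continuously differentiable on (0,r₀), positive, satisfying (d²/dr²)(f(r)^m/m) + ((n-1)/r)·(d/dr)(f(r)^m/m) + α·f(r) + β·r·f'(r) = 0 for all 0 < r < r₀, with f(0) = η₀ and f'(0) = 0. Then f'(r) < 0 for all 0 < r < r₀. -/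
open Set Filter

/-- The radial fast-diffusion self-similar ODE:
`(f^m/m)'' + ((n-1)/r)·(f^m/m)' + α·f + β·r·f' = 0` at the point `r`. -/
def pmODE (n : ℕ) (m α β : ℝ) (f : ℝ → ℝ) (r : ℝ) : Prop :=
  deriv (deriv (fun u => f u ^ m / m)) r
    + (((n : ℝ) - 1) / r) * deriv (fun u => f u ^ m / m) r
    + α * f r + β * r * deriv f r = 0

set_option maxHeartbeats 1000000 in
open Topology MeasureTheory in
theorem local_f_derivative_negative {n : ℕ} (hn : 3 ≤ n) {m η₀ ρ₁ β α r₀ : ℝ}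
    (hm0 : 0 < m) (hm1 : m < ((n : ℝ) - 2) / n) (hη₀ : 0 < η₀) (hρ₁ : 0 < ρ₁)
    (hβ1 : -ρ₁ / 2 < β) (hβ2 : β < m * ρ₁ / ((n : ℝ) - 2 - n * m))
    (hα : α = (2 * β + ρ₁) / (1 - m)) (hr₀ : 0 < r₀) {f : ℝ → ℝ}
    (hf1 : ContDiffOn ℝ 1 f (Ico 0 r₀)) (hf2 : ContDiffOn ℝ 2 f (Ioo 0 r₀))
    (hfpos : ∀ r ∈ Ico (0 : ℝ) r₀, 0 < f r)
    (hode : ∀ r ∈ Ioo (0 : ℝ) r₀, pmODE n m α β f r)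
    (hf0 : f 0 = η₀) (hf0' : derivWithin f (Ici 0) 0 = 0) :
    ∀ r : ℝ, 0 < r → r < r₀ → deriv f r < 0 := by
  -- numeric preliminaries
  have hn3 : (3:ℝ) ≤ (n:ℝ) := by exact_mod_cast hn
  have hn0 : (0:ℝ) < n := by linarith
  have hnm : (n:ℝ) * m < (n:ℝ) - 2 := by
    have := (lt_div_iff₀ hn0).mp hm1
    linarith
  have hm_lt1 : m < 1 := by nlinarith
  have h1m : (0:ℝ) < 1 - m := by linarith
  have hα1m : α * (1 - m) = 2 * β + ρ₁ := by
    rw [hα]; field_simp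
  have hαpos : 0 < α := by
    rw [hα]; exact div_pos (by linarith) h1m
  have hβρ : β * ((n:ℝ) - 2 - n * m) < m * ρ₁ := by
    have hd : (0:ℝ) < (n:ℝ) - 2 - n * m := by linarith
    exact (lt_div_iff₀ hd).mp hβ2
  have hαnβ : (n:ℝ) * β < α := by
    have key : (n:ℝ) * β * (1 - m) < α * (1 - m) := by rw [hα1m]; nlinarith
    exact lt_of_mul_lt_mul_right key h1m.le
  -- notation
  set w : ℝ → ℝ := fun u => f u ^ m / m with hwdef
  set φ : ℝ → ℝ := derivWithin f (Ici 0) with hφdef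
  set F : ℝ → ℝ := fun x => ∫ s in (0:ℝ)..x, s ^ (n-1) * f s with hFdef
  set G : ℝ → ℝ := fun u => u ^ (n-1) * (f u ^ (m-1) * φ u) + β * u ^ n * f u
      + (α - n * β) * F u with hGdef
  have hIoo_sub : Ioo (0:ℝ) r₀ ⊆ Ico 0 r₀ := Ioo_subset_Ico_self
  have hIccsub : ∀ {c : ℝ}, c < r₀ → Icc (0:ℝ) c ⊆ Ico 0 r₀ :=
    fun h x hx => ⟨hx.1, lt_of_le_of_lt hx.2 h⟩
  have hmem : ∀ {r : ℝ}, r ∈ Ioo (0:ℝ) r₀ → Ioo (0:ℝ) r₀ ∈ 𝓝 r :=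
    fun hr => isOpen_Ioo.mem_nhds hr
  have hfc : ContinuousOn f (Ico 0 r₀) := hf1.continuousOn
  have hfd2 : ∀ r ∈ Ioo (0:ℝ) r₀, DifferentiableAt ℝ f r := fun r hr =>
    (hf2.differentiableOn (by norm_num)).differentiableAt (hmem hr)
  have hφeq : ∀ r ∈ Ioo (0:ℝ) r₀, φ r = deriv f r := by
    intro r hr
    exact derivWithin_of_mem_nhds (mem_of_superset (isOpen_Ioi.mem_nhds hr.1) Ioi_subset_Ici_self)
  have hφcont : ContinuousOn φ (Ico 0 r₀) := by
    have h1 : ContinuousOn (derivWithin f (Ico 0 r₀)) (Ico 0 r₀) :=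
      hf1.continuousOn_derivWithin (uniqueDiffOn_Ico 0 r₀) le_rfl
    apply h1.congr
    intro x hx
    apply derivWithin_congr_set
    filter_upwards [isOpen_Iio.mem_nhds hx.2] with y (hy : y < r₀)
    simp only [mem_Ici, mem_Ico, eq_iff_iff]
    exact ⟨fun h => ⟨h, hy⟩, fun h => h.1⟩
  -- derivative of w
  have hwd : ∀ r ∈ Ioo (0:ℝ) r₀, HasDerivAt w (f r ^ (m-1) * deriv f r) r := by
    intro r hr
    have hf' := (hfd2 r hr).hasDerivAt
    have h := (hf'.rpow_const (p := m) (Or.inl (ne_of_gt (hfpos r (hIoo_sub hr))))).div_const m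
    convert h using 1
    iterate 2 rfl
    field_simp [hm0.ne']
  have hw'eq : ∀ r ∈ Ioo (0:ℝ) r₀, deriv w r = f r ^ (m-1) * deriv f r :=
    fun r hr => (hwd r hr).deriv
  have hψeq : ∀ r ∈ Ioo (0:ℝ) r₀, f r ^ (m-1) * φ r = deriv w r := by
    intro r hr; rw [hφeq r hr, hw'eq r hr]
  -- second derivative of w exists
  have hw2 : ContDiffOn ℝ 2 w (Ioo 0 r₀) := by
    intro x hx
    have hfx : ContDiffAt ℝ 2 f x := (hf2 x hx).contDiffAt (hmem hx)
    exact ((hfx.rpow_const_of_ne (ne_of_gt (hfpos x (hIoo_sub hx)))).div_const m).contDiffWithinAt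
  have hw'' : ∀ r ∈ Ioo (0:ℝ) r₀, HasDerivAt (deriv w) (deriv (deriv w) r) r := by
    intro r hr
    have h1 : ContDiffOn ℝ 1 (deriv w) (Ioo 0 r₀) :=
      hw2.deriv_of_isOpen isOpen_Ioo (by norm_num)
    exact ((h1.differentiableOn one_ne_zero).differentiableAt (hmem hr)).hasDerivAt
  have hdfc : ∀ r ∈ Ioo (0:ℝ) r₀, ContinuousAt (deriv f) r := by
    intro r hr
    have h1 : ContDiffOn ℝ 1 (deriv f) (Ioo 0 r₀) :=
      hf2.deriv_of_isOpen isOpen_Ioo (by norm_num)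
    exact h1.continuousOn.continuousAt (hmem hr)
  -- integrability
  have hinteg : ∀ r ∈ Ico (0:ℝ) r₀, IntervalIntegrable (fun s => s ^ (n-1) * f s) volume 0 r := by
    intro r hr
    apply ContinuousOn.intervalIntegrable
    rw [uIcc_of_le hr.1]
    rcases eq_or_lt_of_le hr.1 with h | h
    · simp [← h]
    · exact ((continuous_pow (n-1)).continuousOn).mul (hfc.mono (hIccsub hr.2))
  have hintegc : ∀ (c : ℝ) (r : ℝ), 0 ≤ r →
      IntervalIntegrable (fun s => s ^ (n-1) * c) volume 0 r := by
    intro c r _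
    exact (((continuous_pow (n-1)).mul continuous_const).continuousOn).intervalIntegrable
  have hvalc : ∀ (c : ℝ) (r : ℝ), (∫ s in (0:ℝ)..r, s ^ (n-1) * c) = c * r ^ n / n := by
    intro c r
    rw [intervalIntegral.integral_mul_const, integral_pow]
    have h1 : n - 1 + 1 = n := by omega
    have h2 : ((n:ℝ) - 1) + 1 = (n:ℝ) := by ring
    rw [h1]
    have h3 : ((n - 1 : ℕ) : ℝ) + 1 = (n : ℝ) := by
      have : (1:ℕ) ≤ n := by omega
      push_cast [this]
      ring
    rw [h3]
    have : (0:ℝ) ^ n = 0 := by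
      apply zero_pow; omega
    rw [this]
    ring
  have hFd : ∀ r ∈ Ioo (0:ℝ) r₀, HasDerivAt F (r ^ (n-1) * f r) r := by
    intro r hr
    have hca : ContinuousAt (fun s => s ^ (n-1) * f s) r :=
      ((continuous_pow (n-1)).continuousAt).mul (hfc.continuousAt (Ico_mem_nhds hr.1 hr.2))
    have hsm : StronglyMeasurableAtFilter (fun s => s ^ (n-1) * f s) (𝓝 r) volume := by
      apply ContinuousOn.stronglyMeasurableAtFilter isOpen_Ioo _ r hr
      exact ((continuous_pow (n-1)).continuousOn).mul (hfc.mono hIoo_sub)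
    exact intervalIntegral.integral_hasDerivAt_right (hinteg r (hIoo_sub hr)) hsm hca
  have hFcont : ∀ {c : ℝ}, 0 ≤ c → c < r₀ → ContinuousOn F (Icc 0 c) := by
    intro c h0 hc
    have hi : IntegrableOn (fun s => s ^ (n-1) * f s) (uIcc 0 c) volume := by
      rw [uIcc_of_le h0]
      exact (((continuous_pow (n-1)).continuousOn).mul (hfc.mono (hIccsub hc))).integrableOn_Icc
    have := intervalIntegral.continuousOn_primitive_interval hi
    rwa [uIcc_of_le h0] at this
  -- derivative of G is zero
  have hGd : ∀ r ∈ Ioo (0:ℝ) r₀, HasDerivAt G 0 r := by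
    intro r hr
    obtain ⟨hr1, hr2⟩ := hr
    have hψd : HasDerivAt (fun u => f u ^ (m-1) * φ u) (deriv (deriv w) r) r := by
      apply (hw'' r ⟨hr1, hr2⟩).congr_of_eventuallyEq
      filter_upwards [hmem ⟨hr1, hr2⟩] with y hy
      exact hψeq y hy
    have h1 : HasDerivAt (fun u : ℝ => u ^ (n-1)) (((n-1:ℕ):ℝ) * r ^ (n-2)) r := by
      have := hasDerivAt_pow (n-1) r
      have he : n - 1 - 1 = n - 2 := by omega
      rwa [he] at this
    have hA := h1.mul hψd
    have h2 : HasDerivAt (fun u : ℝ => u ^ n) (((n:ℕ):ℝ) * r ^ (n-1)) r := hasDerivAt_pow n r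
    have hB := ((h2.const_mul β).mul (hfd2 r ⟨hr1, hr2⟩).hasDerivAt)
    have hC := (hFd r ⟨hr1, hr2⟩).const_mul (α - n * β)
    have hsum := (hA.add hB).add hC
    have hODE := hode r ⟨hr1, hr2⟩
    unfold pmODE at hODE
    have hψr : f r ^ (m-1) * φ r = deriv w r := hψeq r ⟨hr1, hr2⟩
    have hw'r : deriv (fun u => f u ^ m / m) r = deriv w r := rfl
    have hw''r : deriv (deriv (fun u => f u ^ m / m)) r = deriv (deriv w) r := rfl
    rw [hw'r, hw''r] at hODE
    have hrne : r ≠ 0 := ne_of_gt hr1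
    have hp1 : r ^ (n-1) = r ^ (n-2) * r := by
      rw [← pow_succ]; congr 1; omega
    have hp2 : r ^ n = r ^ (n-1) * r := by
      rw [← pow_succ]; congr 1; omega
    have hODE' : deriv (deriv w) r * r + ((n:ℝ) - 1) * deriv w r
        + α * f r * r + β * r * deriv f r * r = 0 := by
      field_simp at hODE
      linarith [hODE]
    convert hsum using 1
    iterate 3 rfl
    rw [hψr]
    have hc1 : ((n-1:ℕ):ℝ) = (n:ℝ) - 1 := by
      have : (1:ℕ) ≤ n := by omega
      push_cast [this]; ring
    rw [hc1, hp2, hp1]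
    linear_combination (-(r^(n-2))) * hODE'
  -- G vanishes
  have hG0 : G 0 = 0 := by
    have h1 : (0:ℝ) ^ (n-1) = 0 := by apply zero_pow; omega
    have h2 : (0:ℝ) ^ n = 0 := by apply zero_pow; omega
    simp [hGdef, hFdef, h1, h2]
  have hGzero : ∀ r ∈ Ioo (0:ℝ) r₀, G r = 0 := by
    intro r hr
    have hsub : Icc (0:ℝ) r ⊆ Ico 0 r₀ := hIccsub hr.2
    have hGc : ContinuousOn G (Icc 0 r) := by
      apply ContinuousOn.add
      apply ContinuousOn.add
      · exact ((continuous_pow (n-1)).continuousOn).mul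
          (((hfc.mono hsub).rpow_const
            (fun x hx => Or.inl (ne_of_gt (hfpos x (hsub hx))))).mul (hφcont.mono hsub))
      · exact (continuous_const.mul (continuous_pow n)).continuousOn.mul (hfc.mono hsub)
      · exact continuousOn_const.mul (hFcont hr.1.le hr.2)
    have hGd' : ∀ x ∈ interior (Icc (0:ℝ) r), HasDerivAt G 0 x := by
      rw [interior_Icc]; intro x hx; exact hGd x ⟨hx.1, hx.2.trans hr.2⟩
    have hdiff : DifferentiableOn ℝ G (interior (Icc (0:ℝ) r)) :=
      fun x hx => ((hGd' x hx).differentiableAt).differentiableWithinAt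
    have hmono := monotoneOn_of_deriv_nonneg (convex_Icc 0 r) hGc hdiff
      (fun x hx => le_of_eq ((hGd' x hx).deriv).symm)
    have hanti := antitoneOn_of_deriv_nonpos (convex_Icc 0 r) hGc hdiff
      (fun x hx => le_of_eq ((hGd' x hx).deriv))
    have h0m : (0:ℝ) ∈ Icc (0:ℝ) r := ⟨le_rfl, hr.1.le⟩
    have hrm : r ∈ Icc (0:ℝ) r := ⟨hr.1.le, le_rfl⟩
    have e1 := hmono h0m hrm hr.1.le
    have e2 := hanti h0m hrm hr.1.le
    rw [hG0] at e1 e2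
    linarith
  -- key sign lemma
  have keysign : ∀ r ∈ Ioo (0:ℝ) r₀,
      0 < β * r ^ n * f r + (α - n * β) * F r → deriv f r < 0 := by
    intro r hr hN
    have hGr := hGzero r hr
    rw [hGdef] at hGr
    simp only [hφeq r hr] at hGr
    have hrp : (0:ℝ) < r ^ (n-1) := pow_pos hr.1 _
    have hfp : (0:ℝ) < f r ^ (m-1) := Real.rpow_pos_of_pos (hfpos r (hIoo_sub hr)) _
    by_contra hcon
    push_neg at hcon
    nlinarith [mul_nonneg (mul_nonneg hrp.le hfp.le) hcon]
  -- lower bound on F under monotonicity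
  have hFlb : ∀ r ∈ Ioo (0:ℝ) r₀, (∀ s ∈ Icc (0:ℝ) r, f r ≤ f s) →
      f r * r ^ n / n ≤ F r := by
    intro r hr hmono
    have h := intervalIntegral.integral_mono_on hr.1.le (hintegc (f r) r hr.1.le)
      (hinteg r (hIoo_sub hr))
      (fun x hx => mul_le_mul_of_nonneg_left (hmono x hx) (pow_nonneg hx.1 _))
    rwa [hvalc (f r) r] at h
  -- Claim A
  have claimA : ∀ r ∈ Ioo (0:ℝ) r₀, (∀ s ∈ Icc (0:ℝ) r, f r ≤ f s) → deriv f r < 0 := by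
    intro r hr hmono
    apply keysign r hr
    have hF := hFlb r hr hmono
    have hfr := hfpos r (hIoo_sub hr)
    have hrn : (0:ℝ) < r ^ n := pow_pos hr.1 n
    have h1 : (α - n * β) * (f r * r ^ n / n) ≤ (α - n * β) * F r :=
      mul_le_mul_of_nonneg_left hF (by linarith)
    have heq : β * r ^ n * f r + (α - n * β) * (f r * r ^ n / n)
        = α / n * (r ^ n * f r) := by
      field_simp; ring
    have hpos : 0 < α / n * (r ^ n * f r) := by positivity
    linarith
  -- near zero
  obtain ⟨δ, hδ0, hδr₀, hδ⟩ : ∃ δ, 0 < δ ∧ δ ≤ r₀ ∧ ∀ r ∈ Ioo (0:ℝ) δ, deriv f r < 0 := by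
    set C := (n:ℝ) * |β| + α - n * β with hC
    have hCpos : 0 < C := by
      have h1 : 0 ≤ (n:ℝ) * |β| := mul_nonneg hn0.le (abs_nonneg β)
      rw [hC]; linarith
    set ε := α / (2 * C) with hε
    have hεpos : 0 < ε := by rw [hε]; positivity
    have hcw : ContinuousWithinAt f (Ico 0 r₀) 0 := hfc 0 ⟨le_rfl, hr₀⟩
    have hev : f ⁻¹' Metric.ball (f 0) (ε * η₀) ∈ 𝓝[Ico (0:ℝ) r₀] 0 :=
      hcw (Metric.ball_mem_nhds _ (by positivity))
    obtain ⟨δ₁, hδ₁0, hδ₁⟩ := Metric.mem_nhdsWithin_iff.mp hev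
    refine ⟨min δ₁ r₀, lt_min hδ₁0 hr₀, min_le_right _ _, ?_⟩
    intro r hr
    have hrr₀ : r < r₀ := lt_of_lt_of_le hr.2 (min_le_right _ _)
    have hrIoo : r ∈ Ioo (0:ℝ) r₀ := ⟨hr.1, hrr₀⟩
    have hball : ∀ s ∈ Icc (0:ℝ) r, |f s - η₀| < ε * η₀ := by
      intro s hs
      have hs1 : s ∈ Metric.ball (0:ℝ) δ₁ := by
        rw [Metric.mem_ball, Real.dist_eq, sub_zero, abs_of_nonneg hs.1]
        exact lt_of_le_of_lt hs.2 (lt_of_lt_of_le hr.2 (min_le_left _ _))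
      have hs2 : s ∈ Ico (0:ℝ) r₀ := ⟨hs.1, lt_of_le_of_lt hs.2 hrr₀⟩
      have := hδ₁ ⟨hs1, hs2⟩
      rw [Set.mem_preimage, Metric.mem_ball, Real.dist_eq, hf0] at this
      exact this
    apply keysign r hrIoo
    -- lower bound F
    have hFlow : (η₀ * (1 - ε)) * r ^ n / n ≤ F r := by
      have h := intervalIntegral.integral_mono_on hr.1.le
        (hintegc (η₀ * (1 - ε)) r hr.1.le) (hinteg r (hIoo_sub hrIoo))
        (fun x hx => by
          have := hball x hx
          have h2 : η₀ * (1 - ε) ≤ f x := by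
            have := abs_lt.mp this
            nlinarith [this.1]
          exact mul_le_mul_of_nonneg_left h2 (pow_nonneg hx.1 _))
      rwa [hvalc (η₀ * (1 - ε)) r] at h
    have hfrb : β * η₀ - |β| * ε * η₀ ≤ β * f r := by
      have h := abs_lt.mp (hball r ⟨hr.1.le, le_rfl⟩)
      rcases abs_cases β with ⟨he, hb⟩ | ⟨he, hb⟩
      · rw [he]; nlinarith [h.1]
      · rw [he]; nlinarith [h.2]
    have hrn : (0:ℝ) < r ^ n := pow_pos hr.1 n
    have h1 : (α - n * β) * ((η₀ * (1 - ε)) * r ^ n / n) ≤ (α - n * β) * F r :=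
      mul_le_mul_of_nonneg_left hFlow (by linarith)
    have h2 : r ^ n * (β * η₀ - |β| * ε * η₀) ≤ β * r ^ n * f r := by
      have := mul_le_mul_of_nonneg_left hfrb hrn.le
      nlinarith [this]
    have heq : r ^ n * (β * η₀ - |β| * ε * η₀) + (α - n * β) * ((η₀ * (1 - ε)) * r ^ n / n)
        = r ^ n * η₀ * (α - ε * C) / n := by
      rw [hC]; field_simp; ring
    have heps : α - ε * C = α / 2 := by
      rw [hε]; field_simp; ring
    have hpos : 0 < r ^ n * η₀ * (α / 2) / n := by positivity
    rw [heps] at heq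
    linarith
  -- final argument
  intro r hr1 hr2
  by_contra hcon
  push_neg at hcon
  set A := {x : ℝ | x ∈ Ioo (0:ℝ) r₀ ∧ 0 ≤ deriv f x} with hA
  have hAne : A.Nonempty := ⟨r, ⟨hr1, hr2⟩, hcon⟩
  have hAlb : ∀ a ∈ A, δ ≤ a := by
    rintro a ⟨ha, ha'⟩
    by_contra h
    push_neg at h
    exact absurd ha' (not_le.mpr (hδ a ⟨ha.1, h⟩))
  have hbdd : BddBelow A := ⟨δ, hAlb⟩
  set r₁ := sInf A with hr₁
  have hr₁δ : δ ≤ r₁ := le_csInf hAne hAlb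
  have hr₁le : r₁ ≤ r := csInf_le hbdd ⟨⟨hr1, hr2⟩, hcon⟩
  have hr₁mem : r₁ ∈ Ioo (0:ℝ) r₀ := ⟨lt_of_lt_of_le hδ0 hr₁δ, lt_of_le_of_lt hr₁le hr2⟩
  have hneg : ∀ x ∈ Ioo (0:ℝ) r₁, deriv f x < 0 := by
    intro x hx
    by_contra h
    push_neg at h
    have hxA : x ∈ A := ⟨⟨hx.1, hx.2.trans hr₁mem.2⟩, h⟩
    exact absurd (csInf_le hbdd hxA) (not_le.mpr hx.2)
  have hanti : AntitoneOn f (Icc 0 r₁) := by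
    apply antitoneOn_of_deriv_nonpos (convex_Icc 0 r₁) (hfc.mono (hIccsub hr₁mem.2))
    · rw [interior_Icc]
      intro x hx
      exact (hfd2 x ⟨hx.1, hx.2.trans hr₁mem.2⟩).differentiableWithinAt
    · rw [interior_Icc]
      intro x hx
      exact (hneg x hx).le
  have hmono : ∀ s ∈ Icc (0:ℝ) r₁, f r₁ ≤ f s :=
    fun s hs => hanti hs ⟨hr₁mem.1.le, le_rfl⟩ hs.2
  have hd1 : deriv f r₁ < 0 := claimA r₁ hr₁mem hmono
  have hc := hdfc r₁ hr₁mem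
  have hev : ∀ᶠ x in 𝓝 r₁, deriv f x < 0 := hc (Iio_mem_nhds hd1)
  obtain ⟨c, hc0, hball⟩ := Metric.eventually_nhds_iff.mp hev
  obtain ⟨a, haA, hac⟩ := exists_lt_of_csInf_lt hAne (by linarith : sInf A < r₁ + c)
  have har₁ : r₁ ≤ a := csInf_le hbdd haA
  have : deriv f a < 0 := hball (by rw [Real.dist_eq]; rw [abs_of_nonneg (by linarith)]; linarith)
  exact absurd haA.2 (not_le.mpr this)
end

section
/- Let n ≥ 3 be an integer, let 0 < m < (n-2)/n, η₀ > 0, ρ₁ > 0, let β be a real number with -ρ₁/2 < β < m·ρ₁/(n-2-n·m), and set α = (2β+ρ₁)/(1-m). Let r₀ > 0 and let f : [0,r₀) → ℝ be continuously differentiable on [0,r₀), twice continuously differentiable on (0,r₀), positive, satisfying (d²/dr²)(f(r)^m/m) + ((n-1)/r)·(d/dr)(f(r)^m/m) + α·f(r) + β·r·f'(r) = 0 for all 0 < r < r₀, with f(0) = η₀ and f'(0) = 0. Then for every 0 < r < r₀ one has r^{n-1}·f(r)^{m-1}·f'(r) + (α - n·β)·∫₀^r ρ^{n-1}·f(ρ)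 dρ + β·r^n·f(r) = 0; equivalently, f'(r) = -(α - n·β)·(f(r)^{1-m}/r^{n-1})·∫₀^r ρ^{n-1}·f(ρ) dρ - β·r·f(r)^{2-m} for all 0 < r < r₀. -/
open Set Filter
open scoped Topology

/-- The combination whose derivative vanishes along solutions. -/
noncomputable def Haux (n : ℕ) (m α β : ℝ) (f : ℝ → ℝ) : ℝ → ℝ := fun x =>
  x ^ ((n : ℝ) - 1) * deriv (fun u => f u ^ m / m) x
    + (α - n * β) * (∫ ρ in (0 : ℝ)..x, ρ ^ ((n : ℝ) - 1) * f ρ)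
    + β * x ^ (n : ℝ) * f x

theorem integral_representation {n : ℕ} (hn : 3 ≤ n) {m η₀ ρ₁ β α r₀ : ℝ}
    (hm0 : 0 < m) (hm1 : m < ((n : ℝ) - 2) / n) (hη₀ : 0 < η₀) (hρ₁ : 0 < ρ₁)
    (hβ1 : -ρ₁ / 2 < β) (hβ2 : β < m * ρ₁ / ((n : ℝ) - 2 - n * m))
    (hα : α = (2 * β + ρ₁) / (1 - m)) (hr₀ : 0 < r₀) {f : ℝ → ℝ}
    (hf1 : ContDiffOn ℝ 1 f (Ico 0 r₀)) (hf2 : ContDiffOn ℝ 2 f (Ioo 0 r₀))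
    (hfpos : ∀ r ∈ Ico (0 : ℝ) r₀, 0 < f r)
    (hode : ∀ r ∈ Ioo (0 : ℝ) r₀, pmODE n m α β f r)
    (hf0 : f 0 = η₀) (hf0' : derivWithin f (Ici 0) 0 = 0) :
    ∀ r : ℝ, 0 < r → r < r₀ →
      (r ^ ((n : ℝ) - 1) * f r ^ (m - 1) * deriv f r
        + (α - n * β) * (∫ ρ in (0 : ℝ)..r, ρ ^ ((n : ℝ) - 1) * f ρ)
        + β * r ^ (n : ℝ) * f r = 0) ∧
      deriv f r = -(α - n * β) * (f r ^ (1 - m) / r ^ ((n : ℝ) - 1))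
          * (∫ ρ in (0 : ℝ)..r, ρ ^ ((n : ℝ) - 1) * f ρ)
        - β * r * f r ^ (2 - m) := by
  have hn3 : (3 : ℝ) ≤ (n : ℝ) := by exact_mod_cast hn
  have hm : m ≠ 0 := ne_of_gt hm0
  have hfc : ContinuousOn f (Ico 0 r₀) := hf1.continuousOn
  have hpowc : Continuous fun ρ : ℝ => ρ ^ ((n : ℝ) - 1) :=
    Real.continuous_rpow_const (by linarith)
  have hφc : ContinuousOn (fun ρ : ℝ => ρ ^ ((n : ℝ) - 1) * f ρ) (Ico 0 r₀) :=
    hpowc.continuousOn.mul hfc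
  have hmemIco : ∀ x : ℝ, x ∈ Ioo (0 : ℝ) r₀ → Ico (0 : ℝ) r₀ ∈ 𝓝 x := fun x hx =>
    mem_nhds_iff.2 ⟨Ioo 0 r₀, Ioo_subset_Ico_self, isOpen_Ioo, hx⟩
  have hfd : ∀ x ∈ Ioo (0 : ℝ) r₀, HasDerivAt f (deriv f x) x := fun x hx =>
    (((hf1.differentiableOn one_ne_zero) x (Ioo_subset_Ico_self hx)).differentiableAt
      (hmemIco x hx)).hasDerivAt
  have hfpos' : ∀ x ∈ Ioo (0 : ℝ) r₀, 0 < f x := fun x hx => hfpos x (Ioo_subset_Ico_self hx)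
  -- derivative of g = f^m/m
  have hgd : ∀ x ∈ Ioo (0 : ℝ) r₀,
      HasDerivAt (fun u => f u ^ m / m) (f x ^ (m - 1) * deriv f x) x := by
    intro x hx
    have h1 := (hfd x hx).rpow_const (p := m) (Or.inl (hfpos' x hx).ne')
    have h2 := h1.div_const m
    refine h2.congr_deriv ?_
    rw [div_eq_iff hm]
    ring
  have hderivg : ∀ x ∈ Ioo (0 : ℝ) r₀,
      deriv (fun u => f u ^ m / m) x = f x ^ (m - 1) * deriv f x := fun x hx =>
    (hgd x hx).deriv
  -- g is C², hence deriv g is differentiable on the open interval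
  have hg2 : ContDiffOn ℝ 2 (fun u => f u ^ m / m) (Ioo 0 r₀) :=
    (hf2.rpow_const_of_ne fun x hx => (hfpos' x hx).ne').div_const m
  have hg1 : ContDiffOn ℝ 1 (deriv fun u => f u ^ m / m) (Ioo 0 r₀) :=
    hg2.deriv_of_isOpen isOpen_Ioo (by norm_num)
  have hgdd : ∀ x ∈ Ioo (0 : ℝ) r₀,
      HasDerivAt (deriv fun u => f u ^ m / m)
        (deriv (deriv fun u => f u ^ m / m) x) x := fun x hx =>
    (((hg1.differentiableOn one_ne_zero) x hx).differentiableAt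
      (isOpen_Ioo.mem_nhds hx)).hasDerivAt
  -- FTC derivative of the integral term
  have hFd : ∀ x ∈ Ioo (0 : ℝ) r₀,
      HasDerivAt (fun u => ∫ ρ in (0 : ℝ)..u, ρ ^ ((n : ℝ) - 1) * f ρ)
        (x ^ ((n : ℝ) - 1) * f x) x := by
    intro x hx
    have hsub : Icc (0 : ℝ) x ⊆ Ico 0 r₀ := Icc_subset_Ico_right hx.2
    have hint : IntervalIntegrable (fun ρ : ℝ => ρ ^ ((n : ℝ) - 1) * f ρ)
        MeasureTheory.volume 0 x := by
      apply ContinuousOn.intervalIntegrable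
      rw [uIcc_of_le hx.1.le]
      exact hφc.mono hsub
    refine intervalIntegral.integral_hasDerivAt_right hint ?_ ?_
    · exact ContinuousOn.stronglyMeasurableAtFilter
        isOpen_Ioo (hφc.mono Ioo_subset_Ico_self) x hx
    · exact (hφc.mono Ioo_subset_Ico_self).continuousAt (isOpen_Ioo.mem_nhds hx)
  -- H has zero derivative on the open interval
  have hHd : ∀ x ∈ Ioo (0 : ℝ) r₀, HasDerivAt (Haux n m α β f) 0 x := by
    intro x hx
    have hx0 : (0 : ℝ) < x := hx.1
    have hxne : x ≠ 0 := hx0.ne'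
    have h1 : HasDerivAt (fun u : ℝ => u ^ ((n : ℝ) - 1))
        (((n : ℝ) - 1) * x ^ ((n : ℝ) - 1 - 1)) x :=
      Real.hasDerivAt_rpow_const (Or.inl hxne)
    have h4 : HasDerivAt (fun u : ℝ => u ^ (n : ℝ)) ((n : ℝ) * x ^ ((n : ℝ) - 1)) x :=
      Real.hasDerivAt_rpow_const (Or.inl hxne)
    have key : HasDerivAt (Haux n m α β f)
        ((((n : ℝ) - 1) * x ^ ((n : ℝ) - 1 - 1) * deriv (fun u => f u ^ m / m) x
            + x ^ ((n : ℝ) - 1) * deriv (deriv fun u => f u ^ m / m) x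
          + (α - n * β) * (x ^ ((n : ℝ) - 1) * f x))
          + (β * ((n : ℝ) * x ^ ((n : ℝ) - 1)) * f x + β * x ^ (n : ℝ) * deriv f x)) x :=
      ((h1.mul (hgdd x hx)).add ((hFd x hx).const_mul (α - n * β))).add
        ((h4.const_mul β).mul (hfd x hx))
    have hode' := hode x hx
    rw [pmODE] at hode'
    have e1 : x ^ ((n : ℝ) - 1 - 1) = x ^ ((n : ℝ) - 1) / x := by
      rw [Real.rpow_sub hx0, Real.rpow_one]
    have e2 : x ^ (n : ℝ) = x ^ ((n : ℝ) - 1) * x := by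
      rw [← Real.rpow_add_one hxne]
      congr 1
      ring
    have hzero : (((n : ℝ) - 1) * x ^ ((n : ℝ) - 1 - 1) * deriv (fun u => f u ^ m / m) x
            + x ^ ((n : ℝ) - 1) * deriv (deriv fun u => f u ^ m / m) x
          + (α - n * β) * (x ^ ((n : ℝ) - 1) * f x))
          + (β * ((n : ℝ) * x ^ ((n : ℝ) - 1)) * f x + β * x ^ (n : ℝ) * deriv f x) = 0 := by
      rw [e1, e2]
      field_simp at hode' ⊢
      linear_combination x ^ ((n : ℝ) - 1) * hode'
    rwa [hzero] at key
  -- now fix r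
  intro r hr hrr₀
  have hrI : r ∈ Ioo (0 : ℝ) r₀ := ⟨hr, hrr₀⟩
  -- the filter approaching 0 from inside (0, r)
  set l : Filter ℝ := 𝓝[Ioo 0 r] 0 with hl
  have hlne : l.NeBot := by
    rw [hl, nhdsWithin_Ioo_eq_nhdsGT hr]
    infer_instance
  have hsub0 : Ioo (0 : ℝ) r ⊆ Ico 0 r₀ := fun x hx =>
    ⟨hx.1.le, hx.2.trans hrr₀⟩
  have hsub0' : Ioo (0 : ℝ) r ⊆ Ioo 0 r₀ := fun x hx => ⟨hx.1, hx.2.trans hrr₀⟩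
  have hlle : l ≤ 𝓝[Ico 0 r₀] 0 := nhdsWithin_mono 0 hsub0
  -- limits of the individual pieces
  have tf : Tendsto f l (𝓝 η₀) := by
    have := (hfc 0 ⟨le_rfl, hr₀⟩).mono_left hlle
    rwa [hf0] at this
  have hφcont : ContinuousOn (derivWithin f (Ico 0 r₀)) (Ico 0 r₀) :=
    hf1.continuousOn_derivWithin (uniqueDiffOn_Ico 0 r₀) le_rfl
  have hdw0 : derivWithin f (Ico 0 r₀) 0 = 0 := by
    rw [derivWithin_congr_set (t := Ici 0), hf0']
    rw [Filter.eventuallyEq_set]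
    filter_upwards [Iio_mem_nhds hr₀] with y hy
    simp only [mem_Ico, mem_Ici]
    exact ⟨fun h => h.1, fun h => ⟨h, hy⟩⟩
  have tdw : Tendsto (derivWithin f (Ico 0 r₀)) l (𝓝 0) := by
    have := (hφcont 0 ⟨le_rfl, hr₀⟩).mono_left hlle
    rwa [hdw0] at this
  have tpow : Tendsto (fun ε : ℝ => ε ^ ((n : ℝ) - 1)) l (𝓝 0) := by
    have := (hpowc.tendsto 0).mono_left (nhdsWithin_le_nhds (s := Ioo 0 r))
    rwa [Real.zero_rpow (by intro h; linarith)] at this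
  have tpown : Tendsto (fun ε : ℝ => ε ^ (n : ℝ)) l (𝓝 0) := by
    have hc : Continuous fun ρ : ℝ => ρ ^ (n : ℝ) :=
      Real.continuous_rpow_const (by linarith)
    have := (hc.tendsto 0).mono_left (nhdsWithin_le_nhds (s := Ioo 0 r))
    rwa [Real.zero_rpow (by intro h; linarith)] at this
  have tfp : Tendsto (fun ε => f ε ^ (m - 1)) l (𝓝 (η₀ ^ (m - 1))) :=
    (Real.continuousAt_rpow_const η₀ (m - 1) (Or.inl hη₀.ne')).tendsto.comp tf
  -- limit of the integral term
  have tint : Tendsto (fun ε => ∫ ρ in (0 : ℝ)..ε, ρ ^ ((n : ℝ) - 1) * f ρ) l (𝓝 0) := by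
    obtain ⟨C, hC⟩ := (isCompact_Icc (a := (0:ℝ)) (b := r)).exists_bound_of_continuousOn
      (hφc.mono (Icc_subset_Ico_right hrr₀))
    have hb : ∀ᶠ ε in l, ‖∫ ρ in (0 : ℝ)..ε, ρ ^ ((n : ℝ) - 1) * f ρ‖ ≤ C * |ε| := by
      filter_upwards [self_mem_nhdsWithin] with ε hε
      have hbd := intervalIntegral.norm_integral_le_of_norm_le_const
        (C := C) (f := fun ρ : ℝ => ρ ^ ((n : ℝ) - 1) * f ρ) (a := (0:ℝ)) (b := ε) ?_
      · simpa using hbd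
      · intro x hx
        rw [uIoc_of_le hε.1.le] at hx
        exact hC x ⟨hx.1.le, hx.2.trans hε.2.le⟩
    have hg0 : Tendsto (fun ε : ℝ => C * |ε|) l (𝓝 0) := by
      have : Tendsto (fun ε : ℝ => C * |ε|) (𝓝 0) (𝓝 (C * |0|)) :=
        (continuous_const.mul continuous_abs).tendsto 0
      simp only [abs_zero, mul_zero] at this
      exact this.mono_left nhdsWithin_le_nhds
    exact squeeze_zero_norm' hb hg0
  -- H tends to 0 at 0⁺
  have tH : Tendsto (Haux n m α β f) l (𝓝 0) := by
    have t1 : Tendsto (fun ε => ε ^ ((n : ℝ) - 1)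
        * (f ε ^ (m - 1) * derivWithin f (Ico 0 r₀) ε)) l (𝓝 0) := by
      have := tpow.mul (tfp.mul tdw)
      simpa using this
    have t2 := tint.const_mul (α - (n : ℝ) * β)
    have t3 : Tendsto (fun ε => β * ε ^ (n : ℝ) * f ε) l (𝓝 0) := by
      have := (tpown.const_mul β).mul tf
      simpa using this
    have tall := (t1.add t2).add t3
    rw [show ((0:ℝ) + (α - (n:ℝ) * β) * 0 + 0) = 0 by ring] at tall
    refine Tendsto.congr' ?_ tall
    filter_upwards [self_mem_nhdsWithin] with ε hε
    have hεI : ε ∈ Ioo (0 : ℝ) r₀ := hsub0' hε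
    have hdw : deriv f ε = derivWithin f (Ico 0 r₀) ε :=
      (derivWithin_of_mem_nhds (hmemIco ε hεI)).symm
    simp only [Haux, hderivg ε hεI, hdw]
  -- H is constant on (0, r₀), hence H r = 0
  have hconst : ∀ ε ∈ Ioo (0 : ℝ) r, Haux n m α β f r = Haux n m α β f ε := by
    intro ε hε
    have hmem : ∀ x ∈ Icc ε r, x ∈ Ioo (0 : ℝ) r₀ := fun x hx =>
      ⟨hε.1.trans_le hx.1, (hx.2.trans_lt hrr₀)⟩
    have hcont : ContinuousOn (Haux n m α β f) (Icc ε r) := fun x hx =>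
      ((hHd x (hmem x hx)).continuousAt).continuousWithinAt
    have hder : ∀ x ∈ Ico ε r, HasDerivWithinAt (Haux n m α β f) 0 (Ici x) x :=
      fun x hx => (hHd x (hmem x ⟨hx.1, hx.2.le⟩)).hasDerivWithinAt
    exact constant_of_has_deriv_right_zero hcont hder r (right_mem_Icc.2 hε.2.le)
  have hH0 : Haux n m α β f r = 0 := by
    have tconst : Tendsto (fun _ : ℝ => Haux n m α β f r) l (𝓝 0) := by
      apply tH.congr'
      filter_upwards [self_mem_nhdsWithin] with ε hε
      exact (hconst ε hε).symm
    exact (tendsto_nhds_unique tconst tendsto_const_nhds).symm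
  -- first identity
  have eq1 : r ^ ((n : ℝ) - 1) * f r ^ (m - 1) * deriv f r
      + (α - n * β) * (∫ ρ in (0 : ℝ)..r, ρ ^ ((n : ℝ) - 1) * f ρ)
      + β * r ^ (n : ℝ) * f r = 0 := by
    have := hH0
    rw [Haux, hderivg r hrI] at this
    linear_combination this
  refine ⟨eq1, ?_⟩
  -- second identity, by algebra
  have hfr : 0 < f r := hfpos r ⟨hr.le, hrr₀⟩
  have hP : f r ^ (m - 1) * f r ^ (1 - m) = 1 := by
    rw [← Real.rpow_add hfr]
    norm_num
  have h2m : f r ^ (2 - m) = f r * f r ^ (1 - m) := by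
    rw [show (2 - m) = 1 + (1 - m) by ring, Real.rpow_add hfr, Real.rpow_one]
  have hrn : r ^ (n : ℝ) = r ^ ((n : ℝ) - 1) * r := by
    rw [← Real.rpow_add_one hr.ne']
    congr 1
    ring
  have hX : r ^ ((n : ℝ) - 1) ≠ 0 := (Real.rpow_pos_of_pos hr _).ne'
  rw [hrn] at eq1
  rw [h2m]
  field_simp
  linear_combination (f r ^ (1 - m)) * eq1 - (r ^ ((n : ℝ) - 1) * deriv f r) * hP
end

section
/- Let n ≥ 3 be an integer, let 0 < m < (n-2)/n and let α, β, α̃, β̃ be real numbers with β̃ = -β and α̃ = α - ((n-2)/m)·β. Let f be a positive twice continuously differentiable function on (0,∞) and define g(r) = r^{-(n-2)/m}·f(1/r) for r > 0. Then f satisfies (d²/dr²)(f(r)^m/m) + ((n-1)/r)·(d/dr)(f(r)^m/m) + α·f(r) + β·r·f'(r) = 0 for all r > 0 if and only if g satisfies (d²/dr²)(g(r)^m/m) + ((n-1)/r)·(d/dr)(g(r)^m/m) + r^{(n-2-n·m)/m - 2}·(α̃·g(r) + β̃·r·g'(r)) = 0 for all r > 0. -/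
open Set Filter

/-- The inverted ODE:
`(g^m/m)'' + ((n-1)/r)·(g^m/m)' + r^{(n-2-nm)/m - 2}·(α̃·g + β̃·r·g') = 0` at the point `r`. -/
def invODE (n : ℕ) (m αt βt : ℝ) (g : ℝ → ℝ) (r : ℝ) : Prop :=
  deriv (deriv (fun u => g u ^ m / m)) r
    + (((n : ℝ) - 1) / r) * deriv (fun u => g u ^ m / m) r
    + r ^ (((n : ℝ) - 2 - n * m) / m - 2) * (αt * g r + βt * r * deriv g r) = 0

lemma key_ident {n : ℕ} (hn : 3 ≤ n) {m α β αt βt : ℝ}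
    (hm0 : 0 < m)
    (hβt : βt = -β) (hαt : αt = α - (((n : ℝ) - 2) / m) * β)
    {f g : ℝ → ℝ} (hf2 : ContDiffOn ℝ 2 f (Ioi 0))
    (hfpos : ∀ r ∈ Ioi (0 : ℝ), 0 < f r)
    (hg : ∀ r > (0 : ℝ), g r = r ^ (-(((n : ℝ) - 2) / m)) * f (1 / r))
    {r : ℝ} (hr : 0 < r) :
    deriv (deriv (fun u => g u ^ m / m)) r
      + (((n : ℝ) - 1) / r) * deriv (fun u => g u ^ m / m) r
      + r ^ (((n : ℝ) - 2 - n * m) / m - 2) * (αt * g r + βt * r * deriv g r)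
    = r ^ (-(n : ℝ) - 2) *
      (deriv (deriv (fun u => f u ^ m / m)) (1 / r)
        + (((n : ℝ) - 1) / (1 / r)) * deriv (fun u => f u ^ m / m) (1 / r)
        + α * f (1 / r) + β * (1 / r) * deriv f (1 / r)) := by
  have hm : m ≠ 0 := hm0.ne'
  have hrne : r ≠ 0 := hr.ne'
  -- shorthand
  set U : ℝ → ℝ := fun u => f u ^ m / m with hUdef
  set A : ℝ → ℝ := deriv U with hAdef
  set B : ℝ → ℝ := deriv A with hBdef
  -- smoothness of U on Ioi 0
  have hU2 : ContDiffOn ℝ 2 U (Ioi 0) := by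
    intro x hx
    exact (((Real.contDiffAt_rpow_const_of_ne (hfpos x hx).ne').comp x
      (hf2.contDiffAt (Ioi_mem_nhds hx))).div_const m).contDiffWithinAt
  have h2 : (2 : WithTop ℕ∞) = 1 + 1 := by norm_num
  rw [h2, contDiffOn_succ_iff_deriv_of_isOpen isOpen_Ioi] at hU2
  have hA : ∀ x ∈ Ioi (0:ℝ), HasDerivAt U (A x) x := fun x hx =>
    ((hU2.1 x hx).differentiableAt (Ioi_mem_nhds hx)).hasDerivAt
  have hB : ∀ x ∈ Ioi (0:ℝ), HasDerivAt A (B x) x := fun x hx =>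
    (((hU2.2.2 x hx).differentiableWithinAt (by norm_num)).differentiableAt
      (Ioi_mem_nhds hx)).hasDerivAt
  have hfd : ∀ x ∈ Ioi (0:ℝ), HasDerivAt f (deriv f x) x := fun x hx =>
    ((hf2.contDiffAt (Ioi_mem_nhds hx)).differentiableAt (by norm_num)).hasDerivAt
  -- V is the formula for g^m/m
  set V : ℝ → ℝ := fun x => x ^ (-((n:ℝ)-2)) * U x⁻¹ with hVdef
  have hGV : ∀ x ∈ Ioi (0:ℝ), g x ^ m / m = V x := by
    intro x hx
    have hx' : (0:ℝ) < x⁻¹ := inv_pos.2 hx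
    rw [hg x hx, one_div, Real.mul_rpow (Real.rpow_nonneg hx.le _) (hfpos x⁻¹ hx').le,
      ← Real.rpow_mul hx.le, show (-(((n:ℝ)-2)/m))*m = -((n:ℝ)-2) by field_simp,
      mul_div_assoc]
  -- first derivative of V on Ioi 0
  have hVd : ∀ x ∈ Ioi (0:ℝ), HasDerivAt V
      ((-((n:ℝ)-2)) * x ^ (-((n:ℝ)-2) - 1) * U x⁻¹
        + x ^ (-((n:ℝ)-2)) * (A x⁻¹ * -(x ^ 2)⁻¹)) x := by
    intro x hx
    have hx' : (0:ℝ) < x⁻¹ := inv_pos.2 hx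
    have hpow : HasDerivAt (fun y : ℝ => y ^ (-((n:ℝ)-2)))
        ((-((n:ℝ)-2)) * x ^ (-((n:ℝ)-2) - 1)) x :=
      Real.hasDerivAt_rpow_const (Or.inl hx.ne')
    have hUcomp : HasDerivAt (fun y : ℝ => U y⁻¹) (A x⁻¹ * -(x ^ 2)⁻¹) x := by
      simpa [Function.comp_def] using (hA x⁻¹ hx').comp x (hasDerivAt_inv hx.ne')
    rw [hVdef]
    exact hpow.mul hUcomp
  have hr' : (0:ℝ) < r⁻¹ := inv_pos.2 hr
  -- first derivative of g^m/m
  have hd1 : deriv (fun u => g u ^ m / m) r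
      = (-((n:ℝ)-2)) * r ^ (-((n:ℝ)-2) - 1) * U r⁻¹
        + r ^ (-((n:ℝ)-2)) * (A r⁻¹ * -(r ^ 2)⁻¹) := by
    have h1 : (fun u => g u ^ m / m) =ᶠ[nhds r] V :=
      eventuallyEq_of_mem (Ioi_mem_nhds hr) hGV
    rw [h1.deriv_eq, (hVd r hr).deriv]
  -- second derivative
  have hderivGV1 : ∀ x ∈ Ioi (0:ℝ), deriv (fun u => g u ^ m / m) x
      = (-((n:ℝ)-2)) * x ^ (-((n:ℝ)-2) - 1) * U x⁻¹
        + x ^ (-((n:ℝ)-2)) * (A x⁻¹ * -(x ^ 2)⁻¹) := by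
    intro x hx
    have h1 : (fun u => g u ^ m / m) =ᶠ[nhds x] V :=
      eventuallyEq_of_mem (Ioi_mem_nhds hx) hGV
    rw [h1.deriv_eq, (hVd x hx).deriv]
  have hd2pre : deriv (deriv (fun u => g u ^ m / m)) r
      = deriv (fun x => (-((n:ℝ)-2)) * x ^ (-((n:ℝ)-2) - 1) * U x⁻¹
        + x ^ (-((n:ℝ)-2)) * (A x⁻¹ * -(x ^ 2)⁻¹)) r :=
    (eventuallyEq_of_mem (Ioi_mem_nhds hr) hderivGV1).deriv_eq
  have hUcompr : HasDerivAt (fun y : ℝ => U y⁻¹) (A r⁻¹ * -(r ^ 2)⁻¹) r := by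
    simpa [Function.comp_def] using (hA r⁻¹ hr').comp r (hasDerivAt_inv hrne)
  have hAcompr : HasDerivAt (fun y : ℝ => A y⁻¹) (B r⁻¹ * -(r ^ 2)⁻¹) r := by
    simpa [Function.comp_def] using (hB r⁻¹ hr').comp r (hasDerivAt_inv hrne)
  have hqq : HasDerivAt (fun y : ℝ => -(y ^ 2)⁻¹) (2 * r / (r ^ 2) ^ 2) r := by
    have h := ((hasDerivAt_pow 2 r).inv (pow_ne_zero 2 hrne)).neg
    refine h.congr_deriv ?_
    push_cast
    ring
  have hpowr : HasDerivAt (fun y : ℝ => y ^ (-((n:ℝ)-2)))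
      ((-((n:ℝ)-2)) * r ^ (-((n:ℝ)-2) - 1)) r :=
    Real.hasDerivAt_rpow_const (Or.inl hrne)
  have hpow1 : HasDerivAt (fun y : ℝ => (-((n:ℝ)-2)) * y ^ (-((n:ℝ)-2) - 1))
      ((-((n:ℝ)-2)) * ((-((n:ℝ)-2) - 1) * r ^ (-((n:ℝ)-2) - 1 - 1))) r :=
    (Real.hasDerivAt_rpow_const (Or.inl hrne)).const_mul _
  have hV2 : HasDerivAt (fun x => (-((n:ℝ)-2)) * x ^ (-((n:ℝ)-2) - 1) * U x⁻¹
        + x ^ (-((n:ℝ)-2)) * (A x⁻¹ * -(x ^ 2)⁻¹))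
      ((-((n:ℝ)-2)) * ((-((n:ℝ)-2) - 1) * r ^ (-((n:ℝ)-2) - 1 - 1)) * U r⁻¹
        + (-((n:ℝ)-2)) * r ^ (-((n:ℝ)-2) - 1) * (A r⁻¹ * -(r ^ 2)⁻¹)
        + ((-((n:ℝ)-2)) * r ^ (-((n:ℝ)-2) - 1) * (A r⁻¹ * -(r ^ 2)⁻¹)
          + r ^ (-((n:ℝ)-2)) * (B r⁻¹ * -(r ^ 2)⁻¹ * -(r ^ 2)⁻¹
            + A r⁻¹ * (2 * r / (r ^ 2) ^ 2)))) r :=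
    (hpow1.mul hUcompr).add (hpowr.mul (hAcompr.mul hqq))
  have hd2 : deriv (deriv (fun u => g u ^ m / m)) r
      = (-((n:ℝ)-2)) * ((-((n:ℝ)-2) - 1) * r ^ (-((n:ℝ)-2) - 1 - 1)) * U r⁻¹
        + (-((n:ℝ)-2)) * r ^ (-((n:ℝ)-2) - 1) * (A r⁻¹ * -(r ^ 2)⁻¹)
        + ((-((n:ℝ)-2)) * r ^ (-((n:ℝ)-2) - 1) * (A r⁻¹ * -(r ^ 2)⁻¹)
          + r ^ (-((n:ℝ)-2)) * (B r⁻¹ * -(r ^ 2)⁻¹ * -(r ^ 2)⁻¹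
            + A r⁻¹ * (2 * r / (r ^ 2) ^ 2))) := hd2pre.trans hV2.deriv
  -- derivative of g
  have hfcompr : HasDerivAt (fun y : ℝ => f y⁻¹) (deriv f r⁻¹ * -(r ^ 2)⁻¹) r := by
    simpa [Function.comp_def] using (hfd r⁻¹ hr').comp r (hasDerivAt_inv hrne)
  have hpowγ : HasDerivAt (fun y : ℝ => y ^ (-(((n:ℝ)-2)/m)))
      ((-(((n:ℝ)-2)/m)) * r ^ (-(((n:ℝ)-2)/m) - 1)) r :=
    Real.hasDerivAt_rpow_const (Or.inl hrne)
  have hd3 : deriv g r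
      = (-(((n:ℝ)-2)/m)) * r ^ (-(((n:ℝ)-2)/m) - 1) * f r⁻¹
        + r ^ (-(((n:ℝ)-2)/m)) * (deriv f r⁻¹ * -(r ^ 2)⁻¹) := by
    have h1 : g =ᶠ[nhds r] (fun x => x ^ (-(((n:ℝ)-2)/m)) * f x⁻¹) :=
      eventuallyEq_of_mem (Ioi_mem_nhds hr) (fun x hx => by
        rw [hg x hx, one_div])
    rw [h1.deriv_eq]; exact (hpowγ.mul hfcompr).deriv
  have hgr : g r = r ^ (-(((n:ℝ)-2)/m)) * f r⁻¹ := by rw [hg r hr, one_div]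
  simp only [one_div]
  rw [hd1, hd2, hd3, hgr]
  subst hβt hαt
  have hsplit : ∀ a b c : ℝ, a = b + c → r ^ a = r ^ b * r ^ c := fun a b c h => by
    rw [h, Real.rpow_add hr]
  have hm1 : r ^ (-1:ℝ) = r⁻¹ := Real.rpow_neg_one r
  have hm4 : r ^ (-4:ℝ) = r⁻¹ * r⁻¹ * r⁻¹ * r⁻¹ := by
    rw [hsplit (-4) (-3) (-1) (by norm_num), hsplit (-3) (-2) (-1) (by norm_num),
      hsplit (-2) (-1) (-1) (by norm_num), hm1]
  have e4inv : (r ^ (-(((n:ℝ)-2)/m)))⁻¹ = r ^ (((n:ℝ)-2)/m) := by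
    rw [Real.rpow_neg hr.le, inv_inv]
  have e1 : r ^ (-((n:ℝ)-2) - 1) = r ^ (-((n:ℝ)-2)) * r⁻¹ := by
    rw [hsplit (-((n:ℝ)-2) - 1) (-((n:ℝ)-2)) (-1) (by ring), hm1]
  have e2 : r ^ (-((n:ℝ)-2) - 1 - 1) = r ^ (-((n:ℝ)-2)) * r⁻¹ * r⁻¹ := by
    rw [hsplit (-((n:ℝ)-2) - 1 - 1) (-((n:ℝ)-2) - 1) (-1) (by ring), e1, hm1]
  have e3 : r ^ (-(((n:ℝ)-2)/m) - 1) = r ^ (-(((n:ℝ)-2)/m)) * r⁻¹ := by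
    rw [hsplit (-(((n:ℝ)-2)/m) - 1) (-(((n:ℝ)-2)/m)) (-1) (by ring), hm1]
  have e4 : r ^ (((n:ℝ) - 2 - n * m) / m - 2)
      = r ^ (-((n:ℝ)-2)) * (r ^ (-(((n:ℝ)-2)/m)))⁻¹ * (r⁻¹ * r⁻¹ * r⁻¹ * r⁻¹) := by
    rw [hsplit (((n:ℝ) - 2 - n * m) / m - 2) (-((n:ℝ)-2) + ((n:ℝ)-2)/m) (-4)
      (by field_simp; ring), Real.rpow_add hr, hm4, e4inv]
  have e5 : r ^ (-(n:ℝ) - 2) = r ^ (-((n:ℝ)-2)) * (r⁻¹ * r⁻¹ * r⁻¹ * r⁻¹) := by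
    rw [hsplit (-(n:ℝ) - 2) (-((n:ℝ)-2)) (-4) (by ring), hm4]
  have hv0 : r ^ (-((n:ℝ)-2)) ≠ 0 := (Real.rpow_pos_of_pos hr _).ne'
  have hw0 : r ^ (-(((n:ℝ)-2)/m)) ≠ 0 := (Real.rpow_pos_of_pos hr _).ne'
  rw [e2, e1, e3, e4, e5]
  field_simp
  ring

theorem inversion_equivalence {n : ℕ} (hn : 3 ≤ n) {m α β αt βt : ℝ}
    (hm0 : 0 < m) (hm1 : m < ((n : ℝ) - 2) / n)
    (hβt : βt = -β) (hαt : αt = α - (((n : ℝ) - 2) / m) * β)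
    {f g : ℝ → ℝ} (hf2 : ContDiffOn ℝ 2 f (Ioi 0))
    (hfpos : ∀ r ∈ Ioi (0 : ℝ), 0 < f r)
    (hg : ∀ r > (0 : ℝ), g r = r ^ (-(((n : ℝ) - 2) / m)) * f (1 / r)) :
    (∀ r ∈ Ioi (0 : ℝ), pmODE n m α β f r) ↔
    (∀ r ∈ Ioi (0 : ℝ), invODE n m αt βt g r) := by
  constructor
  · intro hpm r hr
    rw [mem_Ioi] at hr
    have h1r : (0:ℝ) < 1/r := by positivity
    have hp := hpm (1/r) h1r
    unfold pmODE at hp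
    unfold invODE
    rw [key_ident hn hm0 hβt hαt hf2 hfpos hg hr, hp, mul_zero]
  · intro hinv s hs
    rw [mem_Ioi] at hs
    have hr : (0:ℝ) < 1/s := by positivity
    have hkey := key_ident hn hm0 hβt hαt hf2 hfpos hg hr
    rw [one_div_one_div] at hkey
    have h0 := hinv (1/s) hr
    unfold invODE at h0
    have h1 := hkey.symm.trans h0
    unfold pmODE
    exact (mul_eq_zero.mp h1).resolve_left (Real.rpow_pos_of_pos hr _).ne'
end

section
/- Let n ≥ 3 be an integer, let 0 < m < (n-2)/(n+1), let η > 0, let α̃ ≠ 0 and β̃ be real numbers, and let r₀ > 0. Let g : [0,r₀) → ℝ be continuously differentiable on [0,r₀), twice continuously differentiable on (0,r₀), positive, satisfying (d²/dr²)(g(r)^m/m) + ((n-1)/r)·(d/dr)(g(r)^m/m) + r^{(n-2-n·m)/m - 2}·(α̃·g(r) + β̃·r·g'(r)) = 0 for all 0 < r < r₀, with g(0) = η and g'(0) = 0. Then lim_{r→0+} r·g'(r) = 0; moreover g'(r) < 0 for all 0 < r < r₀ if α̃ > 0, and g'(r) > 0 for all 0 < r < r₀ if α̃ < 0. -/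
open Set Filter

theorem g_derivative_sign_m_small {n : ℕ} (hn : 3 ≤ n) {m αt βt η r₀ : ℝ}
    (hm0 : 0 < m) (hm1 : m < ((n : ℝ) - 2) / ((n : ℝ) + 1)) (hη : 0 < η)
    (hαt : αt ≠ 0) (hr₀ : 0 < r₀) {g : ℝ → ℝ}
    (hg1 : ContDiffOn ℝ 1 g (Ico 0 r₀)) (hg2 : ContDiffOn ℝ 2 g (Ioo 0 r₀))
    (hgpos : ∀ r ∈ Ico (0 : ℝ) r₀, 0 < g r)
    (hode : ∀ r ∈ Ioo (0 : ℝ) r₀, invODE n m αt βt g r)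
    (hg0 : g 0 = η) (hg0' : derivWithin g (Ici 0) 0 = 0) :
    Tendsto (fun r : ℝ => r * deriv g r) (nhdsWithin 0 (Ioi 0)) (nhds 0) ∧
    (0 < αt → ∀ r : ℝ, 0 < r → r < r₀ → deriv g r < 0) ∧
    (αt < 0 → ∀ r : ℝ, 0 < r → r < r₀ → 0 < deriv g r) := by
  have hm' : m ≠ 0 := ne_of_gt hm0
  have hnr : (3:ℝ) ≤ (n:ℝ) := by exact_mod_cast hn
  have hn1pos : (0:ℝ) < (n:ℝ) + 1 := by linarith
  have hmn : m * ((n:ℝ) + 1) < (n:ℝ) - 2 := (lt_div_iff₀ hn1pos).mp hm1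
  set σ : ℝ := ((n : ℝ) - 2 - n * m) / m - 2 with hσdef
  have hc : 0 < σ + 1 := by
    have h1 : (0:ℝ) < ((n:ℝ) - 2 - n*m - m) / m := div_pos (by nlinarith) hm0
    have h2 : σ + 1 = ((n:ℝ) - 2 - n*m - m)/m := by
      rw [hσdef]; field_simp; ring
    linarith [h2 ▸ h1]
  -- basic set facts
  have hsub : Ioo (0:ℝ) r₀ ⊆ Ico 0 r₀ := Ioo_subset_Ico_self
  -- the first derivative of g^m/m
  set V : ℝ → ℝ := deriv (fun u => g u ^ m / m) with hVdef
  set P : ℝ → ℝ := fun r => βt * r ^ (σ + 1) * g r ^ (1 - m) with hPdef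
  set B : ℝ → ℝ := fun r => ∫ s in (0:ℝ)..r, P s with hBdef
  set Φ : ℝ → ℝ := fun r => αt * (r ^ (n-1) * V r * Real.exp (B r)) with hΦdef
  -- continuity of P
  have hPc : ContinuousOn P (Ico 0 r₀) := by
    apply ContinuousOn.mul
    · exact continuousOn_const.mul
        (fun x _ => (Real.continuousAt_rpow_const x (σ+1) (Or.inr hc.le)).continuousWithinAt)
    · exact hg1.continuousOn.rpow_const fun x hx => Or.inl (hgpos x hx).ne'
  have hB' : ∀ r ∈ Ioo (0:ℝ) r₀, HasDerivAt B (P r) r := by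
    intro r hr
    have hint : IntervalIntegrable P MeasureTheory.volume 0 r := by
      apply ContinuousOn.intervalIntegrable
      apply hPc.mono
      rw [uIcc_of_le hr.1.le]
      exact Icc_subset_Ico_right hr.2
    exact intervalIntegral.integral_hasDerivAt_right hint
      ((hPc.mono hsub).stronglyMeasurableAtFilter isOpen_Ioo r hr)
      ((hPc r (hsub hr)).continuousAt (Ico_mem_nhds hr.1 hr.2))
  have hg' : ∀ r ∈ Ioo (0:ℝ) r₀, HasDerivAt g (deriv g r) r := fun r hr =>
    ((hg2.differentiableOn two_ne_zero).differentiableAt (isOpen_Ioo.mem_nhds hr)).hasDerivAt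
  have hVeq : ∀ r ∈ Ioo (0:ℝ) r₀, V r = g r ^ (m-1) * deriv g r := by
    intro r hr
    have h := (((hg' r hr).rpow_const (p := m) (Or.inl (hgpos r (hsub hr)).ne')).div_const m).deriv
    rw [hVdef, h]; field_simp
  have hV' : ∀ r ∈ Ioo (0:ℝ) r₀, HasDerivAt V (deriv V r) r := by
    intro r hr
    have hgm : ContDiffOn ℝ 2 (fun u => g u ^ m / m) (Ioo 0 r₀) :=
      (hg2.rpow_const_of_ne fun x hx => (hgpos x (hsub hx)).ne').div_const m
    have hd := hgm.deriv_of_isOpen (m := 1) isOpen_Ioo (by norm_num)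
    exact ((hd.differentiableOn one_ne_zero).differentiableAt (isOpen_Ioo.mem_nhds hr)).hasDerivAt
  -- the derivative of Φ
  have hΦ' : ∀ r ∈ Ioo (0:ℝ) r₀, HasDerivAt Φ
      (-(αt^2 * (Real.exp (B r) * r ^ σ * r ^ (n-1) * g r))) r := by
    intro r hr
    obtain ⟨hr1, hr2⟩ := hr
    have hgr : 0 < g r := hgpos r (hsub ⟨hr1, hr2⟩)
    have hpow : HasDerivAt (fun u : ℝ => u ^ (n-1)) ((↑(n-1)) * r ^ (n-1-1)) r :=
      hasDerivAt_pow (n-1) r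
    have hexp : HasDerivAt (fun u => Real.exp (B u)) (Real.exp (B r) * P r) r :=
      (hB' r ⟨hr1, hr2⟩).exp
    have hprod := (((hpow.mul (hV' r ⟨hr1, hr2⟩)).mul hexp).const_mul αt)
    convert hprod using 1
    any_goals with_reducible_and_instances rfl
    have hode' := hode r ⟨hr1, hr2⟩
    rw [invODE, ← hσdef, ← hVdef] at hode'
    have hVr := hVeq r ⟨hr1, hr2⟩
    have hgg : g r ^ (1-m) = (g r ^ (m-1))⁻¹ := by
      rw [← Real.rpow_neg hgr.le]; norm_num
    have hrσ : r ^ (σ+1) = r ^ σ * r := by rw [Real.rpow_add hr1, Real.rpow_one]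
    have hrn1 : (n:ℝ) - 1 = ((n-1 : ℕ) : ℝ) := by
      have : (1:ℕ) ≤ n := by omega
      push_cast [this]; ring
    have hrpow : (r:ℝ) ^ (n-1) = r ^ (n-1-1) * r := by
      rw [← pow_succ]; congr 1; omega
    have hgm1 : (0:ℝ) < g r ^ (m-1) := Real.rpow_pos_of_pos hgr _
    have hder : deriv V r = -(((n:ℝ)-1)/r * V r + r ^ σ * (αt * g r + βt * r * deriv g r)) := by
      linarith [hode']
    rw [hder, hVr]
    simp only [hPdef, hgg, hrσ, Pi.mul_apply, hVr]
    rw [← hrn1, hrpow]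
    field_simp
    ring
  have hΦ0 : Φ 0 = 0 := by
    have : n - 1 ≠ 0 := by omega
    simp [hΦdef, zero_pow this]
  -- continuity of Φ on [0, r₀)
  have hΦc : ContinuousOn Φ (Ico 0 r₀) := by
    intro x hx
    rcases eq_or_lt_of_le hx.1 with h0 | h0
    · -- x = 0
      have hx0 : x = 0 := h0.symm
      subst hx0
      set D : ℝ → ℝ := derivWithin g (Ico 0 r₀) with hDdef
      have hDc : ContinuousOn D (Ico 0 r₀) :=
        hg1.continuousOn_derivWithin (uniqueDiffOn_Ico 0 r₀) le_rfl
      have hBc0 : ContinuousWithinAt B (Ico 0 r₀) 0 := by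
        have hIcc : Icc (0:ℝ) (r₀/2) ⊆ Ico 0 r₀ :=
          Icc_subset_Ico_right (by linarith)
        have hint : MeasureTheory.IntegrableOn P (uIcc 0 (r₀/2)) MeasureTheory.volume := by
          rw [uIcc_of_le (by linarith : (0:ℝ) ≤ r₀/2)]
          exact (hPc.mono hIcc).integrableOn_Icc
        have hco := intervalIntegral.continuousOn_primitive_interval hint
        have h0mem : (0:ℝ) ∈ uIcc (0:ℝ) (r₀/2) := left_mem_uIcc
        refine (hco 0 h0mem).mono_of_mem_nhdsWithin ?_
        refine mem_nhdsWithin.mpr ⟨Iio (r₀/2), isOpen_Iio, by simpa using (by linarith : (0:ℝ) < r₀/2), ?_⟩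
        rw [uIcc_of_le (by linarith : (0:ℝ) ≤ r₀/2)]
        intro y hy
        exact ⟨hy.2.1, hy.1.le⟩
      have hΨc : ContinuousWithinAt
          (fun r => αt * (r ^ (n-1) * (g r ^ (m-1) * D r) * Real.exp (B r))) (Ico 0 r₀) 0 := by
        exact continuousWithinAt_const.mul
          ((((continuous_pow (n-1)).continuousWithinAt).mul
            (((hg1.continuousOn 0 hx).rpow_const (Or.inl (hgpos 0 hx).ne')).mul (hDc 0 hx))).mul
          (Real.continuous_exp.continuousAt.comp_continuousWithinAt hBc0))
      refine hΨc.congr ?_ ?_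
      · intro y hy
        rcases eq_or_lt_of_le hy.1 with hy0 | hy0
        · have : y = 0 := hy0.symm
          subst this
          have hne : n - 1 ≠ 0 := by omega
          simp [hΦdef, zero_pow hne]
        · have hDy : D y = deriv g y :=
            derivWithin_of_mem_nhds (Ico_mem_nhds hy0 hy.2)
          rw [hΦdef, hDy, ← hVeq y ⟨hy0, hy.2⟩]
      · have hD0 : D 0 = 0 := by
          rw [hDdef, show Ico (0:ℝ) r₀ = Ici 0 ∩ Iio r₀ from (Ici_inter_Iio).symm,
            derivWithin_inter (Iio_mem_nhds hr₀)]
          exact hg0'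
        have hne : n - 1 ≠ 0 := by omega
        simp [hΦ0, hD0, zero_pow hne]
    · exact ((hΦ' x ⟨h0, hx.2⟩).continuousAt).continuousWithinAt
  -- Φ is strictly decreasing
  have hanti : StrictAntiOn Φ (Ico 0 r₀) := by
    apply strictAntiOn_of_deriv_neg (convex_Ico 0 r₀) hΦc
    intro x hx
    rw [interior_Ico] at hx
    rw [(hΦ' x hx).deriv]
    have h1 : 0 < Real.exp (B x) * x ^ σ * x ^ (n-1) * g x := by
      have := hgpos x (hsub hx)
      have hx1 := hx.1
      positivity
    have h2 : 0 < αt^2 := by positivity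
    nlinarith
  -- key sign fact
  have hkey : ∀ r ∈ Ioo (0:ℝ) r₀, αt * deriv g r < 0 := by
    intro r hr
    have h1 : Φ r < Φ 0 := hanti ⟨le_rfl, hr₀⟩ (hsub hr) hr.1
    rw [hΦ0] at h1
    rw [hΦdef] at h1
    simp only at h1
    have h2 : 0 < (r:ℝ) ^ (n-1) * Real.exp (B r) :=
      mul_pos (pow_pos hr.1 _) (Real.exp_pos _)
    have h3 : αt * V r < 0 := by nlinarith
    rw [hVeq r hr] at h3
    have h4 : 0 < g r ^ (m-1) := Real.rpow_pos_of_pos (hgpos r (hsub hr)) _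
    nlinarith
  refine ⟨?_, ?_, ?_⟩
  · -- the limit
    set D : ℝ → ℝ := derivWithin g (Ico 0 r₀) with hDdef
    have hDc : ContinuousOn D (Ico 0 r₀) :=
      hg1.continuousOn_derivWithin (uniqueDiffOn_Ico 0 r₀) le_rfl
    have hD0 : D 0 = 0 := by
      rw [hDdef, show Ico (0:ℝ) r₀ = Ici 0 ∩ Iio r₀ from (Ici_inter_Iio).symm,
        derivWithin_inter (Iio_mem_nhds hr₀)]
      exact hg0'
    have h1 : Tendsto D (nhdsWithin 0 (Ico 0 r₀)) (nhds 0) := by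
      have := (hDc 0 ⟨le_rfl, hr₀⟩).tendsto
      rwa [hD0] at this
    have h2 : Tendsto (deriv g) (nhdsWithin 0 (Ioo 0 r₀)) (nhds 0) := by
      refine (h1.mono_left (nhdsWithin_mono _ hsub)).congr' ?_
      filter_upwards [self_mem_nhdsWithin] with y hy
      exact derivWithin_of_mem_nhds (Ico_mem_nhds hy.1 hy.2)
    have h3 : Tendsto (deriv g) (nhdsWithin 0 (Ioi 0)) (nhds 0) := by
      rwa [nhdsWithin_Ioo_eq_nhdsGT hr₀] at h2
    have h4 : Tendsto (fun r : ℝ => r) (nhdsWithin 0 (Ioi 0)) (nhds 0) :=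
      tendsto_id.mono_left nhdsWithin_le_nhds
    have := h4.mul h3
    simpa using this
  · intro hα r hr1 hr2
    have := hkey r ⟨hr1, hr2⟩
    nlinarith
  · intro hα r hr1 hr2
    have := hkey r ⟨hr1, hr2⟩
    nlinarith
end

section
/- Let n ≥ 3 be an integer, let 0 < m < (n-2)/n, η > 0, and let α̃, β̃ be real numbers with α̃ > 0, β̃ ≠ 0 and α̃/β̃ ≤ (n-2)/m. Let g : [0,∞) → ℝ be continuous on [0,∞), twice continuously differentiable on (0,∞), positive, satisfying (d²/dr²)(g(r)^m/m) + ((n-1)/r)·(d/dr)(g(r)^m/m) + r^{(n-2-n·m)/m - 2}·(α̃·g(r) + β̃·r·g'(r)) = 0 for all r > 0, with g(0) = η and lim_{r→0+} r·g'(r) = 0. Then α̃·g(r) + β̃·r·g'(r) > 0 for all r > 0. -/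
open Set Filter

theorem v_derivative {n : ℕ} (hn : 3 ≤ n) {m αt βt η : ℝ}
    (hm0 : 0 < m) (hm1 : m < ((n : ℝ) - 2) / n) (hη : 0 < η)
    (hαt : 0 < αt) (hβt : βt ≠ 0) (hratio : αt / βt ≤ ((n : ℝ) - 2) / m)
    {g : ℝ → ℝ} (hgc : ContinuousOn g (Ici 0)) (hg2 : ContDiffOn ℝ 2 g (Ioi 0))
    (hgpos : ∀ r ∈ Ici (0 : ℝ), 0 < g r)
    (hode : ∀ r ∈ Ioi (0 : ℝ), invODE n m αt βt g r)
    (hg0 : g 0 = η)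
    (hg0' : Tendsto (fun r : ℝ => r * deriv g r) (nhdsWithin 0 (Ioi 0)) (nhds 0)) :
    ∀ r > (0 : ℝ), 0 < αt * g r + βt * r * deriv g r := by
  have hm : m ≠ 0 := hm0.ne'
  set σ : ℝ := ((n : ℝ) - 2 - n * m) / m - 2 with hσ
  set V : ℝ → ℝ := fun r => αt * g r + βt * r * deriv g r with hVdef
  -- differentiability of g and deriv g on Ioi 0
  have hg1 : ∀ r ∈ Ioi (0 : ℝ), HasDerivAt g (deriv g r) r := by
    intro r hr
    exact (((hg2.differentiableOn (by norm_num)) r hr).differentiableAt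
      (isOpen_Ioi.mem_nhds hr)).hasDerivAt
  have hgd1 : ContDiffOn ℝ 1 (deriv g) (Ioi 0) :=
    hg2.deriv_of_isOpen isOpen_Ioi (by norm_num)
  have hg2' : ∀ r ∈ Ioi (0 : ℝ), HasDerivAt (deriv g) (deriv (deriv g) r) r := by
    intro r hr
    exact (((hgd1.differentiableOn (by norm_num)) r hr).differentiableAt
      (isOpen_Ioi.mem_nhds hr)).hasDerivAt
  have hgc' : ContinuousOn (deriv g) (Ioi 0) := hgd1.continuousOn
  have hgcon : ContinuousOn g (Ioi 0) := hgc.mono Ioi_subset_Ici_self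
  -- the coefficient functions
  set L : ℝ → ℝ := fun r => (αt - ((n : ℝ) - 2) * βt) / (βt * r)
      + (1 - m) * (V r - 2 * αt * g r) / (βt * r * g r)
      - βt * r ^ (σ + 1) / (g r ^ (m - 1)) with hLdef
  set c : ℝ → ℝ := fun r => αt * g r * m / r * (((n : ℝ) - 2) / m - αt / βt) with hcdef
  -- first derivative of g^m/m on Ioi 0
  have hw' : ∀ u ∈ Ioi (0 : ℝ), HasDerivAt (fun u => g u ^ m / m)
      (g u ^ (m - 1) * deriv g u) u := by
    intro u hu
    have hgu : 0 < g u := hgpos u (Set.mem_Ici.mpr hu.le)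
    have h1 : HasDerivAt (fun x : ℝ => x ^ m) (m * g u ^ (m - 1)) (g u) :=
      Real.hasDerivAt_rpow_const (Or.inl hgu.ne')
    have h2 := (h1.comp u (hg1 u hu)).div_const m
    refine h2.congr_deriv ?_
    field_simp
  -- key derivative identity for V
  have key : ∀ r ∈ Ioi (0 : ℝ), HasDerivAt V (L r * V r + c r) r := by
    intro r hr
    have hrpos : (0 : ℝ) < r := hr
    have ha : 0 < g r := hgpos r (Set.mem_Ici.mpr hr.le)
    have hb := hg1 r hr
    have hB := hg2' r hr
    set a := g r with hadef
    set b := deriv g r with hbdef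
    set B := deriv (deriv g) r with hBdef
    -- second derivative of g^m/m at r
    have hp : HasDerivAt (fun u => g u ^ (m - 1)) ((m - 1) * a ^ (m - 2) * b) r := by
      have h1 : HasDerivAt (fun x : ℝ => x ^ (m - 1)) ((m - 1) * a ^ (m - 2)) a := by
        have h0 := Real.hasDerivAt_rpow_const (x := a) (p := m - 1) (Or.inl ha.ne')
        rwa [show m - 1 - 1 = m - 2 by ring] at h0
      exact h1.comp r hb
    have hmul : HasDerivAt (fun u => g u ^ (m - 1) * deriv g u)
        ((m - 1) * a ^ (m - 2) * b * b + a ^ (m - 1) * B) r := hp.mul hB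
    have hderiv1 : deriv (fun u => g u ^ m / m) r = a ^ (m - 1) * b := (hw' r hr).deriv
    have hderiv2 : deriv (deriv (fun u => g u ^ m / m)) r
        = (m - 1) * a ^ (m - 2) * b * b + a ^ (m - 1) * B := by
      have heq : deriv (fun u => g u ^ m / m) =ᶠ[nhds r]
          fun u => g u ^ (m - 1) * deriv g u := by
        filter_upwards [isOpen_Ioi.mem_nhds hr] with u hu
        exact (hw' u hu).deriv
      rw [heq.deriv_eq]
      exact hmul.deriv
    have hE := hode r hr
    unfold invODE at hE
    rw [hderiv1, hderiv2, ← hσ, ← hbdef, ← hadef] at hE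
    -- express V's derivative
    have hVd : HasDerivAt V (αt * b + (βt * b + βt * r * B)) r := by
      have h2 : HasDerivAt (fun u : ℝ => βt * u) βt r := by
        simpa using (hasDerivAt_id r).const_mul βt
      have h3 := h2.mul hB
      have h4 := (hb.const_mul αt).add h3
      exact h4
    convert hVd using 1
    -- algebraic identity from the ODE
    have hane : a ≠ 0 := ha.ne'
    have hrne : r ≠ 0 := hrpos.ne'
    have hP1 : a ^ (m - 1) = a ^ (m - 2) * a := by
      rw [show m - 1 = m - 2 + 1 by ring, Real.rpow_add_one hane]
    have hs1 : r ^ (σ + 1) = r ^ σ * r := Real.rpow_add_one hrne σ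
    set P := a ^ (m - 2) with hPdef
    have hPpos : 0 < P := Real.rpow_pos_of_pos ha _
    rw [hP1] at hE
    have hBeq : B = -((m - 1) * P * b * b + (((n : ℝ) - 1) / r) * (P * a * b)
        + r ^ σ * (αt * a + βt * r * b)) / (P * a) := by
      rw [eq_div_iff (by positivity)]
      linear_combination hE
    show L r * V r + c r = αt * b + (βt * b + βt * r * B)
    rw [hBeq]
    show ((αt - ((n : ℝ) - 2) * βt) / (βt * r)
      + (1 - m) * ((αt * a + βt * r * b) - 2 * αt * a) / (βt * r * a)
      - βt * r ^ (σ + 1) / (a ^ (m - 1))) * (αt * a + βt * r * b)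
      + αt * a * m / r * (((n : ℝ) - 2) / m - αt / βt) = _
    rw [hP1, hs1]
    field_simp
    ring
  -- c is nonnegative
  have hc : ∀ r ∈ Ioi (0 : ℝ), 0 ≤ c r := by
    intro r hr
    have ha : 0 < g r := hgpos r (Set.mem_Ici.mpr (le_of_lt hr))
    have hrp : (0 : ℝ) < r := hr
    have h1 : 0 ≤ αt * g r * m / r := by positivity
    have h2 : 0 ≤ ((n : ℝ) - 2) / m - αt / βt := by linarith
    exact mul_nonneg h1 h2
  -- continuity of L on Ioi 0
  have hLc : ContinuousOn L (Ioi 0) := by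
    have hVc : ContinuousOn V (Ioi 0) := by
      apply ((continuousOn_const.mul hgcon).add
        ((continuousOn_const.mul continuousOn_id).mul hgc'))
    apply ContinuousOn.sub
    · apply ContinuousOn.add
      · exact continuousOn_const.div (continuousOn_const.mul continuousOn_id)
          (fun x hx => mul_ne_zero hβt (ne_of_gt hx))
      · exact (continuousOn_const.mul (hVc.sub (continuousOn_const.mul hgcon))).div
          ((continuousOn_const.mul continuousOn_id).mul hgcon)
          (fun x hx => mul_ne_zero (mul_ne_zero hβt (ne_of_gt hx))
            (ne_of_gt (hgpos x (Set.mem_Ici.mpr (le_of_lt hx)))))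
    · apply ContinuousOn.div
      · exact continuousOn_const.mul (fun x hx =>
          (Real.continuousAt_rpow_const x (σ + 1) (Or.inl (ne_of_gt hx))).continuousWithinAt)
      · exact hgcon.rpow_const (fun x hx => Or.inl (ne_of_gt (hgpos x (Set.mem_Ici.mpr (le_of_lt hx)))))
      · exact fun x hx => ne_of_gt (Real.rpow_pos_of_pos (hgpos x (Set.mem_Ici.mpr (le_of_lt hx))) _)
  -- limit of V at 0+
  have hVlim : Tendsto V (nhdsWithin 0 (Ioi 0)) (nhds (αt * η)) := by
    have hgη : Tendsto g (nhdsWithin 0 (Ioi 0)) (nhds η) := by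
      have := (hgc 0 self_mem_Ici).tendsto
      rw [hg0] at this
      exact this.mono_left (nhdsWithin_mono 0 Ioi_subset_Ici_self)
    have h1 : Tendsto (fun r : ℝ => αt * g r + βt * (r * deriv g r))
        (nhdsWithin 0 (Ioi 0)) (nhds (αt * η + βt * 0)) :=
      (hgη.const_mul αt).add (hg0'.const_mul βt)
    rw [mul_zero, add_zero] at h1
    convert h1 using 2 with r
    ring
  intro r0 hr0
  -- find a starting point a0 < r0 with V a0 > 0
  obtain ⟨a0, ha0pos, hVa0, ha0lt⟩ :
      ∃ a0, a0 ∈ Ioi (0 : ℝ) ∧ 0 < V a0 ∧ a0 < r0 := by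
    have h1 : ∀ᶠ x in nhdsWithin 0 (Ioi 0), 0 < V x :=
      hVlim.eventually (eventually_gt_nhds (by positivity))
    have h2 : ∀ᶠ x in nhdsWithin 0 (Ioi 0), x < r0 :=
      eventually_nhdsWithin_of_eventually_nhds (eventually_lt_nhds hr0)
    exact (eventually_mem_nhdsWithin.and (h1.and h2)).exists.imp
      (fun a ⟨h, h', h''⟩ => ⟨h, h', h''⟩)
  have ha0r0 : a0 ≤ r0 := ha0lt.le
  -- the integrating factor
  set Φ : ℝ → ℝ := fun x => ∫ t in a0..x, L t with hΦdef
  have hIcc : Icc a0 r0 ⊆ Ioi 0 := fun x hx => lt_of_lt_of_le ha0pos hx.1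
  have hΦ' : ∀ x ∈ Icc a0 r0, HasDerivAt Φ (L x) x := by
    intro x hx
    have hxpos : (0 : ℝ) < x := hIcc hx
    apply intervalIntegral.integral_hasDerivAt_right
    · apply (hLc.mono _).intervalIntegrable
      intro t ht
      have h1 := ht.1
      have := lt_min ha0pos hxpos
      exact lt_of_lt_of_le this h1
    · exact ContinuousOn.stronglyMeasurableAtFilter isOpen_Ioi hLc x hxpos
    · exact hLc.continuousAt (isOpen_Ioi.mem_nhds hxpos)
  set u : ℝ → ℝ := fun x => V x * Real.exp (-Φ x) with hudef
  have hu : ∀ x ∈ Icc a0 r0, HasDerivAt u (c x * Real.exp (-Φ x)) x := by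
    intro x hx
    have hxpos : (0 : ℝ) < x := hIcc hx
    have h1 := (key x hxpos).mul (((hΦ' x hx).neg).exp)
    exact h1.congr_deriv (by rw [Pi.neg_apply]; ring)
  have hmono : MonotoneOn u (Icc a0 r0) := by
    apply monotoneOn_of_deriv_nonneg (convex_Icc _ _)
    · exact fun x hx => ((hu x hx).continuousAt).continuousWithinAt
    · intro x hx
      rw [interior_Icc] at hx
      exact ((hu x (Ioo_subset_Icc_self hx)).differentiableAt).differentiableWithinAt
    · intro x hx
      rw [interior_Icc] at hx
      rw [(hu x (Ioo_subset_Icc_self hx)).deriv]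
      exact mul_nonneg (hc x (hIcc (Ioo_subset_Icc_self hx))) (Real.exp_pos _).le
  have hua0 : u a0 = V a0 := by
    simp [hudef, hΦdef, intervalIntegral.integral_same]
  have hur0 : 0 < u r0 := by
    have := hmono (left_mem_Icc.mpr ha0r0) (right_mem_Icc.mpr ha0r0) ha0r0
    rw [hua0] at this
    linarith
  have hexp : 0 < Real.exp (-Φ r0) := Real.exp_pos _
  have : 0 < V r0 := by
    by_contra h
    push_neg at h
    have : u r0 ≤ 0 := mul_nonpos_of_nonpos_of_nonneg h hexp.le
    linarith
  exact this
end

section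
/- Let n ≥ 3 be an integer, let 0 < m < (n-2)/n, η > 0, ρ₁ > 0, let β be a real number with β < m·ρ₁/(n-2-n·m), and set α = (2β+ρ₁)/(1-m). Let f be a positive twice continuously differentiable function on (0,∞) satisfying (d²/dr²)(f(r)^m/m) + ((n-1)/r)·(d/dr)(f(r)^m/m) + α·f(r) + β·r·f'(r) = 0 for all r > 0, lim_{r→∞} r^{(n-2)/m}·f(r) = η, and lim_{r→∞} r^{(n-2)/m + 1}·f'(r) = -((n-2)/m)·η. Then either f'(r) < 0 for all r > 0, or there exists r₀ > 0 such that f'(r) > 0 for 0 < r < r₀, f'(r₀) = 0, and f'(r) < 0 for all r > r₀. -/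
open Set Filter Topology

lemma cross_up {H Hd : ℝ → ℝ} {s t : ℝ} (hst : s < t)
    (hd : ∀ x ∈ Icc s t, HasDerivAt H (Hd x) x)
    (hs : H s ≤ 0) (ht : 0 < H t) :
    ∃ u, s ≤ u ∧ u < t ∧ H u = 0 ∧ 0 ≤ Hd u := by
  have hc : ContinuousOn H (Icc s t) := fun x hx => ((hd x hx).continuousAt).continuousWithinAt
  set A : Set ℝ := {x ∈ Icc s t | H x ≤ 0} with hA
  have hAne : A.Nonempty := ⟨s, ⟨le_refl s, hst.le⟩, hs⟩
  have hAclosed : IsClosed A := hc.preimage_isClosed_of_isClosed isClosed_Icc isClosed_Iic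
  have hAcomp : IsCompact A := isCompact_Icc.of_isClosed_subset hAclosed (fun x hx => hx.1)
  set u := sSup A with hu
  have huA : u ∈ A := hAcomp.sSup_mem hAne
  have huIcc : u ∈ Icc s t := huA.1
  have hut : u < t := lt_of_le_of_ne huIcc.2 (fun h => absurd huA.2 (not_le.2 (h ▸ ht)))
  have hpos : ∀ x, u < x → x ≤ t → 0 < H x := by
    intro x hux hxt
    by_contra hle
    have hxA : x ∈ A := ⟨⟨huIcc.1.trans hux.le, hxt⟩, not_lt.1 hle⟩
    exact absurd (le_csSup hAcomp.bddAbove hxA) (not_le.2 hux)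
  have hmemIoc : Ioc u t ∈ 𝓝[>] u := Ioc_mem_nhdsGT_of_mem ⟨le_refl u, hut⟩
  have hHu0 : H u = 0 := by
    have htend : Tendsto H (𝓝[>] u) (𝓝 (H u)) :=
      (hd u huIcc).continuousAt.continuousWithinAt
    have h0 : 0 ≤ H u := ge_of_tendsto htend (by
      filter_upwards [hmemIoc] with x hx
      exact (hpos x hx.1 hx.2).le)
    exact le_antisymm huA.2 h0
  refine ⟨u, huIcc.1, hut, hHu0, ?_⟩
  have hslope : Tendsto (slope H u) (𝓝[>] u) (𝓝 (Hd u)) := by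
    have h2 := (hd u huIcc).hasDerivWithinAt (s := Ioi u)
    rw [hasDerivWithinAt_iff_tendsto_slope' (notMem_Ioi.2 le_rfl)] at h2
    exact h2
  refine ge_of_tendsto hslope ?_
  filter_upwards [hmemIoc] with x hx
  have hxu : 0 < x - u := sub_pos.2 hx.1
  rw [slope_def_field, hHu0, sub_zero]
  exact div_nonneg (hpos x hx.1 hx.2).le hxu.le

/-- α < 0 case: every zero of `H` has positive derivative, `H` eventually negative ⇒
`H` negative everywhere on `Ioi 0`. -/
lemma no_zero_up {H Hd : ℝ → ℝ} (hH : ∀ r ∈ Ioi (0:ℝ), HasDerivAt H (Hd r) r)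
    (hzero : ∀ u ∈ Ioi (0:ℝ), H u = 0 → 0 < Hd u)
    (hev : ∃ R > (0:ℝ), ∀ r, R ≤ r → H r < 0) :
    ∀ r > (0:ℝ), H r < 0 := by
  obtain ⟨R, hR0, hRneg⟩ := hev
  intro s hs
  by_contra hcon
  have hHs : 0 ≤ H s := not_lt.1 hcon
  set t := max (s + 1) R with ht_def
  have hst : s < t := lt_of_lt_of_le (by linarith) (le_max_left _ _)
  have hHt : H t < 0 := hRneg t (le_max_right _ _)
  have hsub : Icc s t ⊆ Ioi 0 := fun x hx => lt_of_lt_of_le hs hx.1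
  obtain ⟨u, hsu, hut, hu0, hud⟩ :=
    cross_up (H := fun x => -H x) (Hd := fun x => -Hd x) hst
      (fun x hx => (hH x (hsub hx)).neg) (by simpa using hHs) (by simpa using hHt)
  have hu : u ∈ Ioi (0:ℝ) := lt_of_lt_of_le hs hsu
  have : H u = 0 := by linarith [neg_eq_zero.1 hu0]
  have := hzero u hu this
  simp only [neg_nonneg] at hud
  linarith

/-- α > 0 case: every zero of `H` has negative derivative, `H` eventually negative,
`H` nonneg somewhere ⇒ dichotomy point. -/
lemma dicho_down {H Hd : ℝ → ℝ} (hH : ∀ r ∈ Ioi (0:ℝ), HasDerivAt H (Hd r) r)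
    (hzero : ∀ u ∈ Ioi (0:ℝ), H u = 0 → Hd u < 0)
    (hev : ∃ R > (0:ℝ), ∀ r, R ≤ r → H r < 0)
    (hns : ∃ s, 0 < s ∧ 0 ≤ H s) :
    ∃ r₀, 0 < r₀ ∧ (∀ r, 0 < r → r < r₀ → 0 < H r) ∧ H r₀ = 0 ∧ ∀ r, r₀ < r → H r < 0 := by
  obtain ⟨R, hR0, hRneg⟩ := hev
  obtain ⟨s, hs0, hHs⟩ := hns
  set t := max (s + 1) R with ht_def
  have hst : s < t := lt_of_lt_of_le (by linarith) (le_max_left _ _)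
  have hHt : H t < 0 := hRneg t (le_max_right _ _)
  have hsub : Icc s t ⊆ Ioi 0 := fun x hx => lt_of_lt_of_le hs0 hx.1
  have hcont : ContinuousOn H (Icc s t) :=
    fun x hx => ((hH x (hsub hx)).continuousAt).continuousWithinAt
  set A : Set ℝ := {x ∈ Icc s t | 0 ≤ H x} with hA
  have hAne : A.Nonempty := ⟨s, ⟨le_refl s, hst.le⟩, hHs⟩
  have hAclosed : IsClosed A := hcont.preimage_isClosed_of_isClosed isClosed_Icc isClosed_Ici
  have hAcomp : IsCompact A := isCompact_Icc.of_isClosed_subset hAclosed (fun x hx => hx.1)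
  set r₀ := sSup A with hr₀def
  have hr₀A : r₀ ∈ A := hAcomp.sSup_mem hAne
  have hr₀Icc : r₀ ∈ Icc s t := hr₀A.1
  have hr₀0 : 0 < r₀ := lt_of_lt_of_le hs0 hr₀Icc.1
  have hr₀t : r₀ < t := lt_of_le_of_ne hr₀Icc.2
    (fun h => absurd hr₀A.2 (not_le.2 (h ▸ hHt)))
  have hneg : ∀ x, r₀ < x → H x < 0 := by
    intro x hx
    rcases le_or_gt x t with hxt | htx
    · by_contra hle
      have hxA : x ∈ A := ⟨⟨hr₀Icc.1.trans hx.le, hxt⟩, not_lt.1 hle⟩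
      exact absurd (le_csSup hAcomp.bddAbove hxA) (not_le.2 hx)
    · exact hRneg x ((le_max_right _ _).trans htx.le)
  have hH0 : H r₀ = 0 := by
    have htend : Tendsto H (𝓝[>] r₀) (𝓝 (H r₀)) :=
      (hH r₀ hr₀0).continuousAt.continuousWithinAt
    have h0 : H r₀ ≤ 0 := le_of_tendsto htend (by
      filter_upwards [Ioc_mem_nhdsGT_of_mem ⟨le_refl r₀, hr₀t⟩] with x hx
      exact (hneg x hx.1).le)
    exact le_antisymm h0 hr₀A.2
  have hd_neg : Hd r₀ < 0 := hzero r₀ hr₀0 hH0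
  refine ⟨r₀, hr₀0, ?_, hH0, hneg⟩
  intro x hx0 hxr₀
  by_contra hle
  have hHx : H x ≤ 0 := not_lt.1 hle
  -- find y ∈ (x, r₀) with 0 < H y
  obtain ⟨y, hy1, hy2⟩ : ∃ y, slope H r₀ y < 0 ∧ y ∈ Ioo x r₀ := by
    have hw := (hH r₀ hr₀0).hasDerivWithinAt (s := Iio r₀)
    rw [hasDerivWithinAt_iff_tendsto_slope' (notMem_Iio.2 le_rfl)] at hw
    have h1 : ∀ᶠ y in 𝓝[<] r₀, slope H r₀ y < 0 := hw.eventually (Iio_mem_nhds hd_neg)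
    have h2 : Ioo x r₀ ∈ 𝓝[<] r₀ := Ioo_mem_nhdsLT_of_mem ⟨hxr₀, le_refl r₀⟩
    exact (h1.and (eventually_of_mem h2 (fun y hy => hy))).exists
  have hyH : 0 < H y := by
    rw [slope_def_field, hH0] at hy1
    have hden : y - r₀ < 0 := sub_neg.2 hy2.2
    rcases div_neg_iff.1 hy1 with ⟨h1, h2⟩ | ⟨h1, h2⟩
    · linarith
    · linarith
  obtain ⟨u, hxu, huy, hu0, hud⟩ :=
    cross_up hy2.1 (fun z hz => hH z (lt_of_lt_of_le hx0 hz.1)) hHx hyH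
  have hu : u ∈ Ioi (0:ℝ) := lt_of_lt_of_le hx0 hxu
  exact absurd (hzero u hu hu0) (not_lt.2 hud)

/-- α = 0 case: `|Hd| ≤ c·|H|` with `c` continuous, `H` eventually negative ⇒
`H` negative everywhere on `Ioi 0`. -/
lemma no_zero_gronwall {H Hd c : ℝ → ℝ}
    (hH : ∀ r ∈ Ioi (0:ℝ), HasDerivAt H (Hd r) r)
    (hbound : ∀ r ∈ Ioi (0:ℝ), |Hd r| ≤ c r * |H r|)
    (hccont : ContinuousOn c (Ioi 0))
    (hev : ∃ R > (0:ℝ), ∀ r, R ≤ r → H r < 0) :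
    ∀ r > (0:ℝ), H r < 0 := by
  obtain ⟨R, hR0, hRneg⟩ := hev
  intro s hs
  by_contra hcon
  have hHs : 0 ≤ H s := not_lt.1 hcon
  -- find a zero r₀ ≥ s of H
  obtain ⟨r₀, hr₀0, hr₀⟩ : ∃ r₀, 0 < r₀ ∧ H r₀ = 0 := by
    rcases eq_or_lt_of_le hHs with heq | hlt
    · exact ⟨s, hs, heq.symm⟩
    · set t := max (s + 1) R with ht_def
      have hst : s < t := lt_of_lt_of_le (by linarith) (le_max_left _ _)
      have hHt : H t < 0 := hRneg t (le_max_right _ _)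
      have hsub : Icc s t ⊆ Ioi 0 := fun x hx => lt_of_lt_of_le hs hx.1
      have hcont : ContinuousOn H (Icc s t) :=
        fun x hx => ((hH x (hsub hx)).continuousAt).continuousWithinAt
      have h0mem : (0:ℝ) ∈ Ioo (H t) (H s) := ⟨hHt, hlt⟩
      obtain ⟨r₀, hr₀mem, hr₀⟩ := intermediate_value_Ioo' hst.le hcont h0mem
      exact ⟨r₀, lt_trans hs hr₀mem.1, hr₀⟩
  set w := max (r₀ + 1) R with hw_def
  have hr₀w : r₀ < w := lt_of_lt_of_le (by linarith) (le_max_left _ _)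
  have hHw : H w < 0 := hRneg w (le_max_right _ _)
  have hsub : Icc r₀ w ⊆ Ioi 0 := fun x hx => lt_of_lt_of_le hr₀0 hx.1
  obtain ⟨K, hK⟩ := (isCompact_Icc.image_of_continuousOn (hccont.mono hsub)).bddAbove
  have hbd : ∀ x ∈ Ico r₀ w, ‖Hd x‖ ≤ K * ‖H x‖ + 0 := by
    intro x hx
    have hx' : x ∈ Ioi (0:ℝ) := hsub ⟨hx.1, hx.2.le⟩
    have h1 : c x ≤ K := hK (mem_image_of_mem c ⟨hx.1, hx.2.le⟩)
    have h2 := hbound x hx'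
    rw [Real.norm_eq_abs, Real.norm_eq_abs]
    nlinarith [abs_nonneg (H x), abs_nonneg (Hd x)]
  have hgron := norm_le_gronwallBound_of_norm_deriv_right_le
    (f := H) (f' := Hd) (δ := 0) (K := K) (ε := 0) (a := r₀) (b := w)
    (fun x hx => ((hH x (hsub hx)).continuousAt).continuousWithinAt)
    (fun x hx => (hH x (hsub ⟨hx.1, hx.2.le⟩)).hasDerivWithinAt)
    (by simp [hr₀]) hbd
  have := hgron w ⟨hr₀w.le, le_refl w⟩
  rw [gronwallBound_ε0_δ0] at this
  have : H w = 0 := by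
    rw [Real.norm_eq_abs] at this
    exact abs_eq_zero.1 (le_antisymm this (abs_nonneg _))
  linarith


theorem f_derivative_dichotomy {n : ℕ} (hn : 3 ≤ n) {m η ρ₁ β α : ℝ}
    (hm0 : 0 < m) (hm1 : m < ((n : ℝ) - 2) / n) (hη : 0 < η) (hρ₁ : 0 < ρ₁)
    (hβ : β < m * ρ₁ / ((n : ℝ) - 2 - n * m))
    (hα : α = (2 * β + ρ₁) / (1 - m))
    {f : ℝ → ℝ} (hf2 : ContDiffOn ℝ 2 f (Ioi 0))
    (hfpos : ∀ r ∈ Ioi (0 : ℝ), 0 < f r)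
    (hode : ∀ r ∈ Ioi (0 : ℝ), pmODE n m α β f r)
    (hflim : Tendsto (fun r : ℝ => r ^ (((n : ℝ) - 2) / m) * f r) atTop (nhds η))
    (hflim' : Tendsto (fun r : ℝ => r ^ (((n : ℝ) - 2) / m + 1) * deriv f r) atTop
      (nhds (-(((n : ℝ) - 2) / m) * η))) :
    (∀ r > (0 : ℝ), deriv f r < 0) ∨
    (∃ r₀ > (0 : ℝ), (∀ r : ℝ, 0 < r → r < r₀ → 0 < deriv f r) ∧
      deriv f r₀ = 0 ∧ (∀ r > r₀, deriv f r < 0)) := by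
  have hn3 : (3:ℝ) ≤ (n:ℝ) := by exact_mod_cast hn
  have hmm : m ≠ 0 := ne_of_gt hm0
  -- f is differentiable on Ioi 0
  have hfd : ∀ r ∈ Ioi (0:ℝ), HasDerivAt f (deriv f r) r := by
    intro r hr
    exact ((hf2.contDiffAt (isOpen_Ioi.mem_nhds hr)).differentiableAt
      (by norm_num)).hasDerivAt
  -- derivative of g = f^m/m
  have hgd : ∀ r ∈ Ioi (0:ℝ),
      HasDerivAt (fun u => f u ^ m / m) (f r ^ (m-1) * deriv f r) r := by
    intro r hr
    have h1 := ((hfd r hr).rpow_const (p := m) (Or.inl (hfpos r hr).ne')).div_const m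
    refine h1.congr_deriv (Eq.symm ?_)
    field_simp
  have hgderiv : ∀ r ∈ Ioi (0:ℝ),
      deriv (fun u => f u ^ m / m) r = f r ^ (m-1) * deriv f r :=
    fun r hr => (hgd r hr).deriv
  -- deriv f is C¹ on Ioi 0
  have hdf1 : ContDiffOn ℝ 1 (deriv f) (Ioi 0) :=
    hf2.deriv_of_isOpen isOpen_Ioi (by norm_num)
  -- φ = f^(m-1) * f' is differentiable
  have hphi : ∀ r ∈ Ioi (0:ℝ),
      DifferentiableAt ℝ (fun u => f u ^ (m-1) * deriv f u) r := by
    intro r hr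
    have h1 : DifferentiableAt ℝ (fun u => f u ^ (m-1)) r :=
      ((hfd r hr).rpow_const (Or.inl (hfpos r hr).ne')).differentiableAt
    have h2 : DifferentiableAt ℝ (deriv f) r :=
      (hdf1.differentiableOn one_ne_zero).differentiableAt (isOpen_Ioi.mem_nhds hr)
    exact h1.mul h2
  -- deriv g is differentiable
  have hg2 : ∀ r ∈ Ioi (0:ℝ), ∃ cc : ℝ,
      HasDerivAt (deriv (fun u => f u ^ m / m)) cc r := by
    intro r hr
    have heq : (fun u => f u ^ (m-1) * deriv f u)
        =ᶠ[𝓝 r] deriv (fun u => f u ^ m / m) := by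
      filter_upwards [isOpen_Ioi.mem_nhds hr] with x hx
      exact ((hgd x hx).deriv).symm
    exact ⟨_, ((hphi r hr).hasDerivAt).congr_of_eventuallyEq heq.symm⟩
  -- the function H and its derivative Hd
  set H : ℝ → ℝ := fun r => r ^ (n-1) * deriv (fun u => f u ^ m / m) r with hHdef
  set Hd : ℝ → ℝ := fun r => -(r ^ (n-1) * (α * f r + β * r * deriv f r)) with hHddef
  have hcast : ((n-1:ℕ):ℝ) = (n:ℝ) - 1 := by
    rw [Nat.cast_sub (by omega)]; norm_num
  have hH : ∀ r ∈ Ioi (0:ℝ), HasDerivAt H (Hd r) r := by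
    intro r hr
    have hr0 : (0:ℝ) < r := hr
    have hrne : r ≠ 0 := ne_of_gt hr0
    obtain ⟨cc, hcc⟩ := hg2 r hr
    have hp : HasDerivAt (fun x : ℝ => x ^ (n-1)) (((n-1:ℕ):ℝ) * r ^ (n-1-1)) r :=
      hasDerivAt_pow (n-1) r
    have hmul := hp.mul hcc
    have hodeq := hode r hr
    rw [pmODE, hcc.deriv] at hodeq
    have hcval : cc = -(((n:ℝ)-1)/r * deriv (fun u => f u ^ m / m) r)
        - α * f r - β * r * deriv f r := by linarith
    set dgr := deriv (fun u => f u ^ m / m) r with hdgr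
    refine hmul.congr_deriv (Eq.symm ?_)
    simp only [hHddef]
    have hpow : r ^ (n-1) = r ^ (n-2) * r := by
      rw [← pow_succ]; congr 1; omega
    have hpow2 : n - 1 - 1 = n - 2 := by omega
    rw [hcast, hpow2, hpow, hcval]
    set q := r ^ (n-2) with hq
    have hr' : r * r⁻¹ = 1 := mul_inv_cancel₀ hrne
    linear_combination (((n:ℝ)-1) * q * dgr) * hr'
  -- H r = positive * deriv f r
  have hP : ∀ r ∈ Ioi (0:ℝ), 0 < r ^ (n-1) * f r ^ (m-1) :=
    fun r hr => mul_pos (pow_pos hr _) (Real.rpow_pos_of_pos (hfpos r hr) _)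
  have hHval : ∀ r ∈ Ioi (0:ℝ), H r = (r ^ (n-1) * f r ^ (m-1)) * deriv f r := by
    intro r hr
    rw [hHdef]
    simp only
    rw [hgderiv r hr]
    ring
  have hsign_neg : ∀ r ∈ Ioi (0:ℝ), (H r < 0 ↔ deriv f r < 0) := by
    intro r hr
    rw [hHval r hr]
    constructor
    · intro h
      by_contra hle
      nlinarith [hP r hr, not_lt.1 hle]
    · intro h
      exact mul_neg_of_pos_of_neg (hP r hr) h
  have hsign_zero : ∀ r ∈ Ioi (0:ℝ), (H r = 0 ↔ deriv f r = 0) := by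
    intro r hr
    rw [hHval r hr]
    constructor
    · intro h
      rcases mul_eq_zero.1 h with h' | h'
      · exact absurd h' (ne_of_gt (hP r hr))
      · exact h'
    · intro h; rw [h, mul_zero]
  have hsign_pos : ∀ r ∈ Ioi (0:ℝ), (0 < H r ↔ 0 < deriv f r) := by
    intro r hr
    rw [hHval r hr]
    constructor
    · intro h
      by_contra hle
      nlinarith [hP r hr, not_lt.1 hle]
    · intro h
      exact mul_pos (hP r hr) h
  -- eventual negativity of deriv f, hence of H
  have hev : ∃ R > (0:ℝ), ∀ r, R ≤ r → deriv f r < 0 := by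
    have hL : -(((n:ℝ)-2)/m) * η < 0 := by
      apply mul_neg_of_neg_of_pos _ hη
      have : 0 < ((n:ℝ)-2)/m := div_pos (by linarith) hm0
      linarith
    have h1 : ∀ᶠ r : ℝ in atTop, r ^ (((n:ℝ)-2)/m + 1) * deriv f r < 0 :=
      hflim'.eventually (Iio_mem_nhds hL)
    have h2 : ∀ᶠ r : ℝ in atTop, (0:ℝ) < r := eventually_gt_atTop 0
    obtain ⟨R, hR⟩ := eventually_atTop.1 (h1.and h2)
    refine ⟨max R 1, lt_of_lt_of_le one_pos (le_max_right _ _), fun r hr => ?_⟩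
    have hrR : R ≤ r := (le_max_left _ _).trans hr
    obtain ⟨hneg, hpos⟩ := hR r hrR
    by_contra hle
    have : 0 ≤ r ^ (((n:ℝ)-2)/m + 1) * deriv f r :=
      mul_nonneg (Real.rpow_pos_of_pos hpos _).le (not_lt.1 hle)
    linarith
  have hevH : ∃ R > (0:ℝ), ∀ r, R ≤ r → H r < 0 := by
    obtain ⟨R, hR0, hR⟩ := hev
    exact ⟨R, hR0, fun r hr =>
      (hsign_neg r (lt_of_lt_of_le hR0 hr)).2 (hR r hr)⟩
  -- value of Hd at zeros of H
  have hHdzero : ∀ u ∈ Ioi (0:ℝ), H u = 0 → Hd u = -(α * (u^(n-1) * f u)) := by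
    intro u hu h0
    have hD0 : deriv f u = 0 := (hsign_zero u hu).1 h0
    rw [hHddef]
    simp only [hD0]
    ring
  rcases lt_trichotomy α 0 with hαneg | hα0 | hαpos
  · -- α < 0 : no zeros
    left
    intro r hr
    rw [← hsign_neg r hr]
    refine no_zero_up hH ?_ hevH r hr
    intro u hu h0
    rw [hHdzero u hu h0]
    have : 0 < u^(n-1) * f u := mul_pos (pow_pos hu _) (hfpos u hu)
    nlinarith
  · -- α = 0 : Gronwall
    left
    intro r hr
    rw [← hsign_neg r hr]
    refine no_zero_gronwall (c := fun x => |β| * x * f x ^ (1-m)) hH ?_ ?_ hevH r hr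
    · intro x hx
      have hx0 : (0:ℝ) < x := hx
      have hfx : 0 < f x := hfpos x hx
      have h1 : f x ^ (1-m) * f x ^ (m-1) = 1 := by
        rw [← Real.rpow_add hfx]
        norm_num
      have hHd : Hd x = -(β * (x^(n-1) * x * deriv f x)) := by
        rw [hHddef]; simp only [hα0]; ring
      rw [hHd, hHval x hx]
      simp only [abs_neg, abs_mul]
      rw [abs_of_pos hx0, abs_of_pos (pow_pos hx0 (n-1)),
        abs_of_pos (Real.rpow_pos_of_pos hfx (m-1))]
      apply le_of_eq
      linear_combination (-(|β| * (x ^ (n-1) * (x * |deriv f x|)))) * h1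
    · refine ContinuousOn.mul (ContinuousOn.mul continuousOn_const continuousOn_id) ?_
      exact (hf2.continuousOn).rpow_const (fun x hx => Or.inl (hfpos x hx).ne')
  · -- α > 0 : dichotomy
    by_cases hall : ∀ r > (0:ℝ), deriv f r < 0
    · exact Or.inl hall
    right
    push_neg at hall
    obtain ⟨s, hs0, hsD⟩ := hall
    have hns : ∃ s, 0 < s ∧ 0 ≤ H s := by
      refine ⟨s, hs0, ?_⟩
      rw [hHval s hs0]
      exact mul_nonneg (hP s hs0).le hsD
    have hzero : ∀ u ∈ Ioi (0:ℝ), H u = 0 → Hd u < 0 := by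
      intro u hu h0
      rw [hHdzero u hu h0]
      have : 0 < u^(n-1) * f u := mul_pos (pow_pos hu _) (hfpos u hu)
      nlinarith
    obtain ⟨r₀, hr₀0, hleft, hmid, hright⟩ := dicho_down hH hzero hevH hns
    refine ⟨r₀, hr₀0, ?_, (hsign_zero r₀ hr₀0).1 hmid, ?_⟩
    · intro x hx0 hxr₀
      exact (hsign_pos x hx0).1 (hleft x hx0 hxr₀)
    · intro x hx
      exact (hsign_neg x (lt_trans hr₀0 hx)).1 (hright x hx)
end
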